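/- arXiv:1310.7257 — 4 statements merged into one kernel-verified Lean document; each statement's English description precedes it below -/
import Mathlib

section
/- If μ = μ₁ × μ₂ is a product of Borel probability measures on ℝ^{n₁} × ℝ^{n₂}, then for β = (β₁, β₂) ∈ ℕ^{n₁} × ℕ^{n₂} with moments of order |β| finite, p_β^μ(x₁, x₂) = p_{β₁}^{μ₁}(x₁) · p_{β₂}^{μ₂}(x₂). -/
open MeasureTheory MvPolynomial

noncomputable section

def mdeg {ι : Type*} [Fintype ι] (β : ι →₀ ℕ) : ℕ := ∑ i, β i

def IsSegalFamily {ι : Type*} [Fintype ι] [DecidableEq ι]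
    (μ : Measure (ι → ℝ)) (N : ℕ∞)
    (p : (ι →₀ ℕ) → MvPolynomial ι ℝ) : Prop :=
  p 0 = 1 ∧
  (∀ β : ι →₀ ℕ, (mdeg β : ℕ∞) < N → ∀ j : ι,
      pderiv j (p β) = (β j : ℝ) • p (β - Finsupp.single j 1)) ∧
  (∀ β : ι →₀ ℕ, 0 < mdeg β → (mdeg β : ℕ∞) < N → ∫ x, eval x (p β) ∂μ = 0)

def HasMoments {ι : Type*} [Fintype ι] (μ : Measure (ι → ℝ)) (N : ℕ∞) : Prop :=
  ∀ k : ℕ, (k : ℕ∞) < N → Integrable (fun x : ι → ℝ => (∑ i, |x i|) ^ k) μ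

section Helpers

variable {ι : Type*} [Fintype ι] [DecidableEq ι]

lemma mdeg_eq_zero {β : ι →₀ ℕ} (h : mdeg β = 0) : β = 0 := by
  ext i
  have := Finset.sum_eq_zero_iff.mp h i (Finset.mem_univ i)
  simpa using this

lemma mdeg_sub_single {β : ι →₀ ℕ} {j : ι} (h : β j ≠ 0) :
    mdeg (β - Finsupp.single j 1) + 1 = mdeg β := by
  set γ : ι →₀ ℕ := β - Finsupp.single j 1 with hγ
  have key : ∀ i, γ i = if i = j then β j - 1 else β i := by
    intro i
    rcases eq_or_ne i j with rfl | hij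
    · simp [hγ, Finsupp.tsub_apply]
    · simp [hγ, Finsupp.tsub_apply, Finsupp.single_apply, Ne.symm hij, hij]
  unfold mdeg
  calc (∑ i, γ i) + 1
      = (∑ i, if i = j then β j - 1 else β i) + 1 := by
        rw [Finset.sum_congr rfl fun i _ => key i]
    _ = ((β j - 1) + ∑ i ∈ Finset.univ.erase j, β i) + 1 := by
        rw [← Finset.add_sum_erase _ (fun i => if i = j then β j - 1 else β i)
          (Finset.mem_univ j), if_pos rfl]
        congr 1
        refine congrArg _ (Finset.sum_congr rfl fun i hi => ?_)
        rw [if_neg (Finset.ne_of_mem_erase hi)]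
    _ = β j + ∑ i ∈ Finset.univ.erase j, β i := by omega
    _ = ∑ i, β i := Finset.add_sum_erase _ _ (Finset.mem_univ j)

lemma sum_eq_mdeg (m : ι →₀ ℕ) : (m.sum fun _ e => e) = mdeg m :=
  Finsupp.sum_fintype _ _ (fun _ => rfl)

lemma coeff_pderiv_of_ne_zero {R : Type*} [CommRing R] (j : ι) (m : ι →₀ ℕ) (hm : m j ≠ 0)
    (P : MvPolynomial ι R) :
    coeff (m - Finsupp.single j 1) (pderiv j P) = (m j : R) * coeff m P := by
  induction P using MvPolynomial.induction_on' with
  | monomial s a =>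
    rw [pderiv_monomial, coeff_monomial, coeff_monomial]
    by_cases hsm : s = m
    · subst hsm
      simp [mul_comm]
    · rw [if_neg hsm, mul_zero]
      by_cases hd : s - Finsupp.single j 1 = m - Finsupp.single j 1
      · rw [if_pos hd]
        by_cases hsj : s j = 0
        · simp [hsj]
        · exfalso
          apply hsm
          ext i
          have hdi := DFunLike.congr_fun hd i
          simp only [Finsupp.tsub_apply, Finsupp.single_apply] at hdi
          by_cases hij : j = i
          · subst hij; simp at hdi; omega
          · simpa [hij] using hdi
      · rw [if_neg hd]
  | add p q hp hq =>
    rw [map_add, coeff_add, coeff_add, hp, hq, mul_add]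

lemma eq_C_of_pderiv_eq_zero (P : MvPolynomial ι ℝ) (h : ∀ j, pderiv j P = 0) :
    P = C (coeff 0 P) := by
  ext m
  rw [coeff_C]
  by_cases hm : 0 = m
  · subst hm; simp
  · rw [if_neg hm]
    by_contra hc
    obtain ⟨j, hj⟩ : ∃ j, m j ≠ 0 := by
      by_contra hall
      push_neg at hall
      exact hm (Finsupp.ext fun i => (hall i).symm ▸ rfl).symm
    have := coeff_pderiv_of_ne_zero j m hj P
    rw [h j] at this
    simp only [coeff_zero] at this
    exact (mul_ne_zero (Nat.cast_ne_zero.mpr hj) hc) this.symm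

lemma totalDegree_le_of_pderiv (P : MvPolynomial ι ℝ) (d : ℕ)
    (h : ∀ j, (pderiv j P).totalDegree ≤ d) : P.totalDegree ≤ d + 1 := by
  rw [MvPolynomial.totalDegree]
  apply Finset.sup_le
  intro m hm
  rw [sum_eq_mdeg]
  by_contra hgt
  push_neg at hgt
  obtain ⟨j, hj⟩ : ∃ j, m j ≠ 0 := by
    by_contra hall
    push_neg at hall
    have : m = 0 := Finsupp.ext fun i => hall i
    rw [this] at hgt
    simp [mdeg] at hgt
  have hc : coeff (m - Finsupp.single j 1) (pderiv j P) ≠ 0 := by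
    rw [coeff_pderiv_of_ne_zero j m hj]
    exact mul_ne_zero (Nat.cast_ne_zero.mpr hj) (MvPolynomial.mem_support_iff.mp hm)
  have hle := MvPolynomial.le_totalDegree (MvPolynomial.mem_support_iff.mpr hc)
  rw [sum_eq_mdeg] at hle
  have := mdeg_sub_single hj
  have := h j
  omega

lemma deg_bound {μ : Measure (ι → ℝ)} {N : ℕ∞} {p : (ι →₀ ℕ) → MvPolynomial ι ℝ}
    (hp : IsSegalFamily μ N p) :
    ∀ n (β : ι →₀ ℕ), mdeg β = n → (mdeg β : ℕ∞) < N → (p β).totalDegree ≤ mdeg β := by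
  intro n
  induction n using Nat.strong_induction_on with
  | _ n ih =>
    intro β hβn hβN
    rcases Nat.eq_zero_or_pos n with h0 | hpos
    · subst h0
      rw [mdeg_eq_zero hβn, hp.1]
      simp [mdeg, MvPolynomial.totalDegree_one]
    · have hn : n = (n - 1) + 1 := by omega
      rw [hβn, hn]
      apply totalDegree_le_of_pderiv
      intro j
      rw [hp.2.1 β hβN j]
      by_cases hj : β j = 0
      · simp [hj]
      · have hsub := mdeg_sub_single (β := β) hj
        have hlt : mdeg (β - Finsupp.single j 1) < n := by omega
        have hmle : mdeg (β - Finsupp.single j 1) ≤ mdeg β := by omega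
        have hltN : ((mdeg (β - Finsupp.single j 1) : ℕ) : ℕ∞) < N :=
          lt_of_le_of_lt (by exact_mod_cast hmle) hβN
        have := ih _ hlt (β - Finsupp.single j 1) rfl hltN
        refine le_trans (MvPolynomial.totalDegree_smul_le _ _) (by omega)

lemma integrable_eval (μ : Measure (ι → ℝ)) [IsProbabilityMeasure μ] {N : ℕ∞}
    (hmom : HasMoments μ N) (P : MvPolynomial ι ℝ) (k : ℕ)
    (hd : P.totalDegree ≤ k) (hk : (k : ℕ∞) < N) :
    Integrable (fun x => eval x P) μ := by
  have hg : Integrable (fun x : ι → ℝ => (1 + ∑ i, |x i|) ^ k) μ := by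
    have hrw : ∀ x : ι → ℝ, (1 + ∑ i, |x i|) ^ k =
        ∑ j ∈ Finset.range (k + 1), (∑ i, |x i|) ^ j * (1 : ℝ) ^ (k - j) * (Nat.choose k j) := by
      intro x
      rw [add_comm]
      exact add_pow _ _ _
    simp only [one_pow, mul_one] at hrw
    simp_rw [hrw]
    apply integrable_finset_sum
    intro j hj
    have hjk : j ≤ k := Nat.lt_succ_iff.mp (Finset.mem_range.mp hj)
    have hjN : (j : ℕ∞) < N := lt_of_le_of_lt (by exact_mod_cast hjk) hk
    exact (hmom j hjN).mul_const _
  set Cc : ℝ := ∑ m ∈ P.support, |coeff m P| with hCc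
  refine (hg.const_mul Cc).mono' ?_ ?_
  · exact (MvPolynomial.continuous_eval P).aestronglyMeasurable
  · refine Filter.Eventually.of_forall fun x => ?_
    set s : ℝ := ∑ i, |x i| with hs
    have hs0 : 0 ≤ s := Finset.sum_nonneg fun i _ => abs_nonneg _
    have h1s : 1 ≤ 1 + s := by linarith
    rw [Real.norm_eq_abs, MvPolynomial.eval_eq]
    calc |∑ m ∈ P.support, coeff m P * ∏ i ∈ m.support, x i ^ m i|
        ≤ ∑ m ∈ P.support, |coeff m P * ∏ i ∈ m.support, x i ^ m i| :=
          Finset.abs_sum_le_sum_abs _ _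
      _ ≤ ∑ m ∈ P.support, |coeff m P| * (1 + s) ^ k := by
          apply Finset.sum_le_sum
          intro m hm
          rw [abs_mul]
          apply mul_le_mul_of_nonneg_left _ (abs_nonneg _)
          calc |∏ i ∈ m.support, x i ^ m i|
              = ∏ i ∈ m.support, |x i| ^ m i := by
                rw [Finset.abs_prod]
                exact Finset.prod_congr rfl fun i _ => abs_pow _ _
            _ ≤ ∏ i ∈ m.support, (1 + s) ^ m i := by
                apply Finset.prod_le_prod
                · intro i _; positivity
                · intro i _
                  apply pow_le_pow_left₀ (abs_nonneg _)
                  have : |x i| ≤ s := Finset.single_le_sum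
                    (fun i _ => abs_nonneg (x i)) (Finset.mem_univ i)
                  linarith
            _ = (1 + s) ^ (∑ i ∈ m.support, m i) := Finset.prod_pow_eq_pow_sum _ _ _
            _ ≤ (1 + s) ^ k := by
                apply pow_le_pow_right₀ h1s
                have := MvPolynomial.le_totalDegree hm
                rw [Finsupp.sum] at this
                omega
      _ = Cc * (1 + s) ^ k := (Finset.sum_mul _ _ _).symm

lemma segal_unique (μ : Measure (ι → ℝ)) [IsProbabilityMeasure μ] {N : ℕ∞}
    (hmom : HasMoments μ N) {p q : (ι →₀ ℕ) → MvPolynomial ι ℝ}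
    (hp : IsSegalFamily μ N p) (hq : IsSegalFamily μ N q) :
    ∀ n (β : ι →₀ ℕ), mdeg β = n → (mdeg β : ℕ∞) < N → p β = q β := by
  intro n
  induction n using Nat.strong_induction_on with
  | _ n ih =>
    intro β hβn hβN
    rcases Nat.eq_zero_or_pos n with h0 | hpos
    · subst h0
      rw [mdeg_eq_zero hβn, hp.1, hq.1]
    · have hderiv : ∀ j, pderiv j (p β - q β) = 0 := by
        intro j
        rw [map_sub, hp.2.1 β hβN j, hq.2.1 β hβN j]
        by_cases hj : β j = 0
        · simp [hj]
        · have hsub := mdeg_sub_single (β := β) hj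
          have hlt : mdeg (β - Finsupp.single j 1) < n := by omega
          have hmle : mdeg (β - Finsupp.single j 1) ≤ mdeg β := by omega
          have hltN : ((mdeg (β - Finsupp.single j 1) : ℕ) : ℕ∞) < N :=
            lt_of_le_of_lt (by exact_mod_cast hmle) hβN
          rw [ih _ hlt (β - Finsupp.single j 1) rfl hltN]
          simp
      have hC := eq_C_of_pderiv_eq_zero _ hderiv
      set c : ℝ := coeff 0 (p β - q β) with hc
      have heval : ∀ x, eval x (p β) = eval x (q β) + c := by
        intro x
        have := congrArg (eval x) hC
        rw [map_sub, eval_C] at this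
        linarith
      have hqint : Integrable (fun x => eval x (q β)) μ :=
        integrable_eval μ hmom (q β) (mdeg β) (deg_bound hq n β hβn hβN) hβN
      have hp0 := hp.2.2 β (hβn ▸ hpos) hβN
      have hq0 := hq.2.2 β (hβn ▸ hpos) hβN
      simp only [heval] at hp0
      rw [integral_add hqint (integrable_const c), hq0, integral_const,
        probReal_univ, one_smul, zero_add] at hp0
      have : p β - q β = 0 := by rw [hC, hp0, map_zero]
      exact sub_eq_zero.mp this

section Split

variable {ι κ : Type*}

def fsInl (β : (ι ⊕ κ) →₀ ℕ) : ι →₀ ℕ :=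
  β.comapDomain Sum.inl Sum.inl_injective.injOn

def fsInr (β : (ι ⊕ κ) →₀ ℕ) : κ →₀ ℕ :=
  β.comapDomain Sum.inr Sum.inr_injective.injOn

@[simp] lemma fsInl_apply (β : (ι ⊕ κ) →₀ ℕ) (i : ι) : fsInl β i = β (Sum.inl i) := rfl
@[simp] lemma fsInr_apply (β : (ι ⊕ κ) →₀ ℕ) (j : κ) : fsInr β j = β (Sum.inr j) := rfl

lemma fsInl_sumElim (β₁ : ι →₀ ℕ) (β₂ : κ →₀ ℕ) : fsInl (Finsupp.sumElim β₁ β₂) = β₁ :=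
  Finsupp.ext fun i => by simp [Finsupp.sumElim_inl]

lemma fsInr_sumElim (β₁ : ι →₀ ℕ) (β₂ : κ →₀ ℕ) : fsInr (Finsupp.sumElim β₁ β₂) = β₂ :=
  Finsupp.ext fun j => by simp [Finsupp.sumElim_inr]

@[simp] lemma fsInl_zero : fsInl (0 : (ι ⊕ κ) →₀ ℕ) = 0 := Finsupp.ext fun i => rfl
@[simp] lemma fsInr_zero : fsInr (0 : (ι ⊕ κ) →₀ ℕ) = 0 := Finsupp.ext fun j => rfl

variable [DecidableEq ι] [DecidableEq κ]

lemma fsInl_sub_single_inl (β : (ι ⊕ κ) →₀ ℕ) (i : ι) :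
    fsInl (β - Finsupp.single (Sum.inl i) 1) = fsInl β - Finsupp.single i 1 := by
  classical
  refine Finsupp.ext fun i' => ?_
  simp only [fsInl_apply, Finsupp.tsub_apply, Finsupp.single_apply, Sum.inl.injEq]

lemma fsInr_sub_single_inl (β : (ι ⊕ κ) →₀ ℕ) (i : ι) :
    fsInr (β - Finsupp.single (Sum.inl i) 1) = fsInr β := by
  classical
  refine Finsupp.ext fun j => ?_
  simp [Finsupp.tsub_apply, Finsupp.single_apply]

lemma fsInl_sub_single_inr (β : (ι ⊕ κ) →₀ ℕ) (j : κ) :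
    fsInl (β - Finsupp.single (Sum.inr j) 1) = fsInl β := by
  classical
  refine Finsupp.ext fun i => ?_
  simp [Finsupp.tsub_apply, Finsupp.single_apply]

lemma fsInr_sub_single_inr (β : (ι ⊕ κ) →₀ ℕ) (j : κ) :
    fsInr (β - Finsupp.single (Sum.inr j) 1) = fsInr β - Finsupp.single j 1 := by
  classical
  refine Finsupp.ext fun j' => ?_
  simp only [fsInr_apply, Finsupp.tsub_apply, Finsupp.single_apply, Sum.inr.injEq]

lemma mdeg_split [Fintype ι] [Fintype κ] (β : (ι ⊕ κ) →₀ ℕ) :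
    mdeg β = mdeg (fsInl β) + mdeg (fsInr β) := by
  unfold mdeg
  rw [Fintype.sum_sum_type]
  simp

lemma mdeg_sumElim [Fintype ι] [Fintype κ] (β₁ : ι →₀ ℕ) (β₂ : κ →₀ ℕ) :
    mdeg (Finsupp.sumElim β₁ β₂) = mdeg β₁ + mdeg β₂ := by
  rw [mdeg_split, fsInl_sumElim, fsInr_sumElim]

end Split

end Helpers

end

theorem segal_prod {n₁ n₂ : ℕ}
    (μ₁ : Measure (Fin n₁ → ℝ)) (μ₂ : Measure (Fin n₂ → ℝ))
    [IsProbabilityMeasure μ₁] [IsProbabilityMeasure μ₂] (N : ℕ∞)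
    (hmom : HasMoments
      ((μ₁.prod μ₂).map (Equiv.sumArrowEquivProdArrow (Fin n₁) (Fin n₂) ℝ).symm) N)
    (p : ((Fin n₁ ⊕ Fin n₂) →₀ ℕ) → MvPolynomial (Fin n₁ ⊕ Fin n₂) ℝ)
    (p₁ : (Fin n₁ →₀ ℕ) → MvPolynomial (Fin n₁) ℝ)
    (p₂ : (Fin n₂ →₀ ℕ) → MvPolynomial (Fin n₂) ℝ)
    (hp : IsSegalFamily
      ((μ₁.prod μ₂).map (Equiv.sumArrowEquivProdArrow (Fin n₁) (Fin n₂) ℝ).symm) N p)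
    (hp₁ : IsSegalFamily μ₁ N p₁) (hp₂ : IsSegalFamily μ₂ N p₂)
    (β₁ : Fin n₁ →₀ ℕ) (β₂ : Fin n₂ →₀ ℕ)
    (hβ : ((mdeg β₁ + mdeg β₂ : ℕ) : ℕ∞) < N) :
    p (Finsupp.sumElim β₁ β₂) =
      (rename Sum.inl (p₁ β₁)) * (rename Sum.inr (p₂ β₂)) := by
  classical
  set e := Equiv.sumArrowEquivProdArrow (Fin n₁) (Fin n₂) ℝ with he
  set μ : Measure ((Fin n₁ ⊕ Fin n₂) → ℝ) := (μ₁.prod μ₂).map e.symm with hμ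
  have hmeas : Measurable (e.symm : (Fin n₁ → ℝ) × (Fin n₂ → ℝ) → (Fin n₁ ⊕ Fin n₂) → ℝ) := by
    apply measurable_pi_iff.mpr
    intro s
    cases s with
    | inl i => exact (measurable_pi_apply i).comp measurable_fst
    | inr i => exact (measurable_pi_apply i).comp measurable_snd
  haveI : IsProbabilityMeasure μ := Measure.isProbabilityMeasure_map hmeas.aemeasurable
  set q : ((Fin n₁ ⊕ Fin n₂) →₀ ℕ) → MvPolynomial (Fin n₁ ⊕ Fin n₂) ℝ := fun β =>
    rename Sum.inl (p₁ (fsInl β)) * rename Sum.inr (p₂ (fsInr β)) with hq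
  have hN1 : ∀ β : (Fin n₁ ⊕ Fin n₂) →₀ ℕ, (mdeg β : ℕ∞) < N → (mdeg (fsInl β) : ℕ∞) < N := by
    intro β hβN
    refine lt_of_le_of_lt ?_ hβN
    have : mdeg (fsInl β) ≤ mdeg β := by rw [mdeg_split β]; omega
    exact_mod_cast this
  have hN2 : ∀ β : (Fin n₁ ⊕ Fin n₂) →₀ ℕ, (mdeg β : ℕ∞) < N → (mdeg (fsInr β) : ℕ∞) < N := by
    intro β hβN
    refine lt_of_le_of_lt ?_ hβN
    have : mdeg (fsInr β) ≤ mdeg β := by rw [mdeg_split β]; omega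
    exact_mod_cast this
  have hqS : IsSegalFamily μ N q := by
    refine ⟨?_, ?_, ?_⟩
    · simp only [hq, fsInl_zero, fsInr_zero, hp₁.1, hp₂.1, map_one, one_mul]
    · intro β hβN j
      cases j with
      | inl i =>
        have hvars : Sum.inl i ∉ (rename Sum.inr (p₂ (fsInr β))).vars := by
          intro hmem
          obtain ⟨j', _, hEq⟩ := MvPolynomial.mem_vars_rename _ _ hmem
          cases hEq
        simp only [hq]
        rw [pderiv_mul, pderiv_eq_zero_of_notMem_vars hvars, mul_zero, add_zero,
          pderiv_rename Sum.inl_injective, hp₁.2.1 (fsInl β) (hN1 β hβN) i,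
          _root_.map_smul, smul_mul_assoc, fsInl_sub_single_inl, fsInr_sub_single_inl]
        rfl
      | inr j =>
        have hvars : Sum.inr j ∉ (rename Sum.inl (p₁ (fsInl β))).vars := by
          intro hmem
          obtain ⟨j', _, hEq⟩ := MvPolynomial.mem_vars_rename _ _ hmem
          cases hEq
        simp only [hq]
        rw [pderiv_mul, pderiv_eq_zero_of_notMem_vars hvars, zero_mul, zero_add,
          pderiv_rename Sum.inr_injective, hp₂.2.1 (fsInr β) (hN2 β hβN) j,
          _root_.map_smul, mul_smul_comm, fsInl_sub_single_inr, fsInr_sub_single_inr]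
        rfl
    · intro β hpos hβN
      have hint : ∫ x, eval x (q β) ∂μ = ∫ z, eval (e.symm z) (q β) ∂(μ₁.prod μ₂) := by
        rw [hμ]
        exact integral_map hmeas.aemeasurable
          ((MvPolynomial.continuous_eval _).aestronglyMeasurable)
      have hev : ∀ z : (Fin n₁ → ℝ) × (Fin n₂ → ℝ),
          eval (e.symm z) (q β) = eval z.1 (p₁ (fsInl β)) * eval z.2 (p₂ (fsInr β)) := by
        intro z
        simp only [hq, map_mul, eval_rename]
        rfl
      rw [hint]
      simp_rw [hev]
      rw [integral_prod_mul (f := fun y => eval y (p₁ (fsInl β))) (g := fun y => eval y (p₂ (fsInr β)))]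
      by_cases h1 : 0 < mdeg (fsInl β)
      · rw [hp₁.2.2 (fsInl β) h1 (hN1 β hβN), zero_mul]
      · have h2 : 0 < mdeg (fsInr β) := by
          have := mdeg_split β
          omega
        rw [hp₂.2.2 (fsInr β) h2 (hN2 β hβN), mul_zero]
  have hβ' : (mdeg (Finsupp.sumElim β₁ β₂) : ℕ∞) < N := by
    rw [mdeg_sumElim]
    exact_mod_cast hβ
  have huniq := segal_unique μ hmom hp hqS (mdeg (Finsupp.sumElim β₁ β₂))
    (Finsupp.sumElim β₁ β₂) rfl hβ'
  rw [huniq]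
  simp only [hq, fsInl_sumElim, fsInr_sumElim]
end

section
/- Transformation theorem for Segal polynomials: for every multi-index α ∈ ℕ^m with |α| < N and every x ∈ ℝ^n, p_α^{μ_T}(Tx) = Σ_{β ∈ ℕ^n, |β| = |α|} A_{α,β} p_β^μ(x), where A_{α,β} = Σ_Γ (α!/Γ!) T^Γ, the sum running over all m×n matrices Γ with nonnegative integer entries whose row sums equal α (Γ·1_n = α) and column sums equal β (Γᵗ·1_m = β). -/
open MeasureTheory MvPolynomial

noncomputable section

open scoped Classical in
def transCoeff {m n : ℕ} (T : Matrix (Fin m) (Fin n) ℝ)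
    (α : Fin m → ℕ) (β : Fin n → ℕ) : ℝ :=
  ∑ᶠ Γ : Matrix (Fin m) (Fin n) ℕ,
    if (∀ i, ∑ j, Γ i j = α i) ∧ (∀ j, ∑ i, Γ i j = β j) then
      ((∏ i, Nat.factorial (α i) : ℕ) : ℝ) / ((∏ i, ∏ j, Nat.factorial (Γ i j) : ℕ) : ℝ) * ∏ i, ∏ j, T i j ^ Γ i j
    else 0


namespace SegalAux

variable {m n : ℕ}

/-! ### Basic `mdeg` lemmas -/

lemma mdeg_eq_zero {β : Fin n →₀ ℕ} (h : mdeg β = 0) : β = 0 := by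
  have := Finset.sum_eq_zero_iff.mp h
  ext i; simpa using this i (Finset.mem_univ i)

lemma mdeg_add (β γ : Fin n →₀ ℕ) : mdeg (β + γ) = mdeg β + mdeg γ := by
  simp [mdeg, Finset.sum_add_distrib]

lemma mdeg_single (j : Fin n) : mdeg (Finsupp.single j 1) = 1 := by
  simp [mdeg, Finsupp.single_apply]

lemma sub_add_single {β : Fin n →₀ ℕ} {j : Fin n} (h : β j ≠ 0) :
    β - Finsupp.single j 1 + Finsupp.single j 1 = β :=
  tsub_add_cancel_of_le (Finsupp.single_le_iff.mpr (Nat.one_le_iff_ne_zero.mpr h))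

lemma mdeg_sub_single {β : Fin n →₀ ℕ} {j : Fin n} (h : β j ≠ 0) :
    mdeg (β - Finsupp.single j 1) + 1 = mdeg β := by
  conv_rhs => rw [← sub_add_single h]
  rw [mdeg_add, mdeg_single]

/-! ### Coefficients of partial derivatives -/

lemma coeff_pderiv (j : Fin n) (f : MvPolynomial (Fin n) ℝ) (d : Fin n →₀ ℕ) :
    coeff d (pderiv j f) = (d j + 1 : ℝ) * coeff (d + Finsupp.single j 1) f := by
  induction f using MvPolynomial.induction_on' with
  | monomial s a =>
    classical
    rw [pderiv_monomial, coeff_monomial, coeff_monomial]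
    by_cases hs : s j = 0
    · have hR : s ≠ d + Finsupp.single j 1 := by
        intro hcon; subst hcon; simp at hs
      rw [if_neg hR]
      simp [hs]
    · have key : s - Finsupp.single j 1 = d ↔ s = d + Finsupp.single j 1 := by
        constructor
        · intro h; rw [← h]; exact (sub_add_single hs).symm
        · intro h; rw [h]; simp
      by_cases hd : s - Finsupp.single j 1 = d
      · rw [if_pos hd, if_pos (key.mp hd)]
        have : s j = d j + 1 := by
          rw [key.mp hd]; simp
        rw [this]; push_cast; ring
      · rw [if_neg hd, if_neg (fun hc => hd (key.mpr hc))]; simp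
  | add f g hf hg => simp [hf, hg, mul_add]

lemma eq_C_of_pderiv_eq_zero {f : MvPolynomial (Fin n) ℝ}
    (h : ∀ j, pderiv j f = 0) : f = C (coeff 0 f) := by
  ext d
  by_cases hd : d = 0
  · simp [hd]
  · have hC : coeff d (C (coeff 0 f) : MvPolynomial (Fin n) ℝ) = 0 := by
      rw [coeff_C, if_neg (fun hc => hd hc.symm)]
    rw [hC]
    obtain ⟨j, hj⟩ : ∃ j, d j ≠ 0 := by
      by_contra hc; push_neg at hc; exact hd (by ext i; simp [hc i])
    set e := d - Finsupp.single j 1 with he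
    have h2 := coeff_pderiv j f e
    rw [h j, coeff_zero] at h2
    have h3 : e + Finsupp.single j 1 = d := sub_add_single hj
    rw [h3] at h2
    have h4 : (e j + 1 : ℝ) ≠ 0 := by positivity
    exact (mul_eq_zero.mp h2.symm).resolve_left h4

/-! ### The substitution homomorphism -/

def lin (T : Matrix (Fin m) (Fin n) ℝ) (i : Fin m) : MvPolynomial (Fin n) ℝ :=
  ∑ j, C (T i j) * X j

def Phi (T : Matrix (Fin m) (Fin n) ℝ) : MvPolynomial (Fin m) ℝ →ₐ[ℝ] MvPolynomial (Fin n) ℝ :=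
  aeval (lin T)

lemma pderiv_lin (T : Matrix (Fin m) (Fin n) ℝ) (i : Fin m) (j : Fin n) :
    pderiv j (lin T i) = C (T i j) := by
  classical
  rw [lin, map_sum]
  rw [Finset.sum_eq_single j]
  · simp
  · intro b _ hb
    simp [pderiv_X_of_ne hb]
  · simp

lemma chain_rule (T : Matrix (Fin m) (Fin n) ℝ) (f : MvPolynomial (Fin m) ℝ) (j : Fin n) :
    pderiv j (Phi T f) = ∑ i, C (T i j) * Phi T (pderiv i f) := by
  induction f using MvPolynomial.induction_on with
  | C a => simp [Phi]
  | add f g hf hg => simp only [map_add, hf, hg, mul_add, Finset.sum_add_distrib]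
  | mul_X f i hf =>
    classical
    simp only [map_mul, Phi, aeval_X] at *
    rw [Derivation.leibniz, hf]
    simp only [Derivation.leibniz, pderiv_X, smul_eq_mul]
    rw [pderiv_lin]
    have key : ∀ x : Fin m, C (T x j) * (aeval (lin T)) (f * (Pi.single x (1:MvPolynomial (Fin m) ℝ) : Fin m → MvPolynomial (Fin m) ℝ) i + X i * (pderiv x) f)
        = (if x = i then C (T i j) * (aeval (lin T)) f else 0)
          + lin T i * (C (T x j) * (aeval (lin T)) ((pderiv x) f)) := by
      intro x
      rw [map_add, map_mul, map_mul, aeval_X]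
      by_cases h : x = i
      · subst h; simp [Pi.single_apply]; ring
      · have : (Pi.single x (1:MvPolynomial (Fin m) ℝ) : Fin m → MvPolynomial (Fin m) ℝ) i = 0 := by
          simp [Pi.single_apply, Ne.symm h]
        rw [this, if_neg h]; simp; ring
    rw [Finset.sum_congr rfl (fun x _ => key x), Finset.sum_add_distrib,
      Finset.sum_ite_eq' Finset.univ i, ← Finset.mul_sum]
    simp
    ring

/-! ### Homogeneity -/

lemma mdeg_eq_degree {ι : Type*} [Fintype ι] (β : ι →₀ ℕ) : mdeg β = β.degree := by
  rw [mdeg, Finsupp.degree]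
  exact (Finset.sum_subset (Finset.subset_univ _) (by
    intro i _ hi
    exact Finsupp.notMem_support_iff.mp hi)).symm

lemma Phi_monomial (T : Matrix (Fin m) (Fin n) ℝ) (α : Fin m →₀ ℕ) :
    Phi T (monomial α 1) = ∏ i, (lin T i) ^ (α i) := by
  rw [Phi, aeval_monomial, map_one, one_mul, Finsupp.prod_pow]

lemma lin_isHomogeneous (T : Matrix (Fin m) (Fin n) ℝ) (i : Fin m) :
    (lin T i).IsHomogeneous 1 := by
  rw [lin]
  exact MvPolynomial.IsHomogeneous.sum Finset.univ (fun j => C (T i j) * X j) 1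
    (fun j _ => isHomogeneous_C_mul_X (T i j) j)

lemma Phi_monomial_isHomogeneous (T : Matrix (Fin m) (Fin n) ℝ) (α : Fin m →₀ ℕ) :
    (Phi T (monomial α 1)).IsHomogeneous (mdeg α) := by
  rw [Phi_monomial]
  have := MvPolynomial.IsHomogeneous.prod Finset.univ (fun i => (lin T i) ^ (α i))
    (fun i => α i) (fun i _ => by
      simpa using (lin_isHomogeneous T i).pow (α i))
  simpa [mdeg] using this

lemma mdeg_of_coeff_ne_zero {T : Matrix (Fin m) (Fin n) ℝ} {α : Fin m →₀ ℕ}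
    {β : Fin n →₀ ℕ} (h : coeff β (Phi T (monomial α 1)) ≠ 0) : mdeg β = mdeg α := by
  have := Phi_monomial_isHomogeneous T α h
  rw [mdeg_eq_degree, Finsupp.degree_eq_weight_one]
  exact this

/-! ### The multinomial expansion and `transCoeff` -/

lemma prod_monomial {ι : Type*} (s : Finset ι) (f : ι → (Fin n →₀ ℕ)) (a : ι → ℝ) :
    ∏ i ∈ s, (monomial (f i) (a i) : MvPolynomial (Fin n) ℝ)
      = monomial (∑ i ∈ s, f i) (∏ i ∈ s, a i) := by
  induction s using Finset.cons_induction with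
  | empty => simp [MvPolynomial.monomial_zero']
  | cons i s hi ih =>
      rw [Finset.prod_cons, Finset.prod_cons, Finset.sum_cons, ih, monomial_mul]

lemma prod_X_pow (k : Fin n → ℕ) :
    ∏ j, (X j : MvPolynomial (Fin n) ℝ) ^ k j
      = monomial (Finsupp.equivFunOnFinite.symm k) 1 := by
  rw [monomial_eq, Finsupp.prod_pow, map_one, one_mul]
  exact Finset.prod_congr rfl fun j _ => by simp

lemma lin_pow (T : Matrix (Fin m) (Fin n) ℝ) (i : Fin m) (d : ℕ) :
    (lin T i) ^ d = ∑ k ∈ Finset.univ.piAntidiag d,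
      monomial (Finsupp.equivFunOnFinite.symm k)
        ((Nat.multinomial Finset.univ k : ℝ) * ∏ j, T i j ^ k j) := by
  rw [lin, Finset.sum_pow_eq_sum_piAntidiag]
  refine Finset.sum_congr rfl fun k _ => ?_
  have h1 : ∏ j, (C (T i j) * X j : MvPolynomial (Fin n) ℝ) ^ k j
      = C (∏ j, T i j ^ k j) * monomial (Finsupp.equivFunOnFinite.symm k) 1 := by
    calc ∏ j, (C (T i j) * X j : MvPolynomial (Fin n) ℝ) ^ k j
        = ∏ j, (C (T i j ^ k j) * (X j : MvPolynomial (Fin n) ℝ) ^ k j) :=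
          Finset.prod_congr rfl fun j _ => by rw [mul_pow, map_pow]
      _ = (∏ j, C (T i j ^ k j)) * ∏ j, (X j : MvPolynomial (Fin n) ℝ) ^ k j :=
          Finset.prod_mul_distrib
      _ = _ := by rw [← map_prod, prod_X_pow]
  rw [h1, ← mul_assoc]
  have h2 : ((Nat.multinomial Finset.univ k : MvPolynomial (Fin n) ℝ))
      = C ((Nat.multinomial Finset.univ k : ℝ)) := by
    simp
  rw [h2, ← map_mul, C_mul_monomial, mul_one]

lemma Phi_monomial_expand (T : Matrix (Fin m) (Fin n) ℝ) (α : Fin m →₀ ℕ) :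
    Phi T (monomial α 1) = ∑ g ∈ Fintype.piFinset (fun i => Finset.univ.piAntidiag (α i)),
      monomial (∑ i, Finsupp.equivFunOnFinite.symm (g i))
        (∏ i, ((Nat.multinomial Finset.univ (g i) : ℝ) * ∏ j, T i j ^ g i j)) := by
  rw [Phi_monomial]
  calc ∏ i, (lin T i) ^ (α i)
      = ∏ i, ∑ k ∈ Finset.univ.piAntidiag (α i),
          monomial (Finsupp.equivFunOnFinite.symm k)
            ((Nat.multinomial Finset.univ k : ℝ) * ∏ j, T i j ^ k j) :=
        Finset.prod_congr rfl fun i _ => lin_pow T i (α i)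
    _ = _ := by
        rw [Finset.prod_univ_sum]
        exact Finset.sum_congr rfl fun g _ => prod_monomial _ _ _

theorem transCoeff_eq (T : Matrix (Fin m) (Fin n) ℝ) (α : Fin m →₀ ℕ) (β : Fin n →₀ ℕ) :
    transCoeff T ⇑α ⇑β = coeff β (Phi T (monomial α 1)) := by
  classical
  rw [Phi_monomial_expand, transCoeff]
  set S : Finset (Matrix (Fin m) (Fin n) ℕ) :=
    Fintype.piFinset (fun i => Finset.univ.piAntidiag (α i)) with hS
  have hmem : ∀ Γ : Matrix (Fin m) (Fin n) ℕ, Γ ∈ S ↔ ∀ i, ∑ j, Γ i j = α i := by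
    intro Γ
    rw [hS]; refine Iff.trans Fintype.mem_piFinset ?_
    constructor
    · intro h i
      exact ((Finset.mem_piAntidiag).mp (h i)).1
    · intro h i
      exact (Finset.mem_piAntidiag).mpr ⟨h i, fun j _ => Finset.mem_univ j⟩
  rw [finsum_eq_sum_of_support_subset _ (s := S) (by
    intro Γ hΓ
    simp only [Function.mem_support] at hΓ
    by_cases hc : (∀ i, ∑ j, Γ i j = α i) ∧ (∀ j, ∑ i, Γ i j = β j)
    · exact Finset.mem_coe.mpr ((hmem Γ).mpr hc.1)
    · exact absurd (if_neg hc) hΓ)]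
  rw [coeff_sum]
  refine Finset.sum_congr rfl fun Γ hΓ => ?_
  have hrow : ∀ i, ∑ j, Γ i j = α i := (hmem Γ).mp hΓ
  rw [coeff_monomial]
  have hcond : ((∀ i, ∑ j, Γ i j = α i) ∧ (∀ j, ∑ i, Γ i j = β j))
      ↔ ((∑ i, Finsupp.equivFunOnFinite.symm (Γ i)) = β) := by
    constructor
    · rintro ⟨-, h2⟩
      ext j
      rw [Finsupp.finset_sum_apply]
      simpa using h2 j
    · intro h
      refine ⟨hrow, fun j => ?_⟩
      have := DFunLike.congr_fun h j
      rw [Finsupp.finset_sum_apply] at this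
      simpa using this
  rw [if_congr hcond rfl rfl]
  split_ifs with h
  · have hfac : (∏ i, Nat.factorial (α i))
        = (∏ i, Nat.multinomial Finset.univ (Γ i)) * ∏ i, ∏ j, Nat.factorial (Γ i j) := by
      rw [← Finset.prod_mul_distrib]
      refine Finset.prod_congr rfl fun i _ => ?_
      rw [mul_comm, Nat.multinomial_spec, hrow i]
    have hne : ((∏ i, ∏ j, Nat.factorial (Γ i j) : ℕ) : ℝ) ≠ 0 := by
      positivity
    rw [div_mul_eq_mul_div, div_eq_iff hne]
    rw [Finset.prod_mul_distrib]
    push_cast [hfac]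
    ring
  · rfl

/-! ### Analytic lemmas -/

def DegLE (f : MvPolynomial (Fin n) ℝ) (d : ℕ) : Prop :=
  ∀ γ, coeff γ f ≠ 0 → mdeg γ ≤ d

lemma continuous_eval (f : MvPolynomial (Fin n) ℝ) :
    Continuous fun x : Fin n → ℝ => eval x f := by
  have h : (fun x : Fin n → ℝ => eval x f)
      = fun x => ∑ d ∈ f.support, coeff d f * ∏ i, x i ^ d i := funext fun x => eval_eq' x f
  rw [h]
  exact continuous_finset_sum _ fun d _ =>
    (continuous_const.mul (continuous_finset_prod _ fun i _ => (continuous_apply i).pow _))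

lemma continuous_mulVec (T : Matrix (Fin m) (Fin n) ℝ) : Continuous T.mulVec := by
  have h : T.mulVec = fun x (i : Fin m) => ∑ j, T i j * x j := by
    funext x i
    rfl
  rw [h]
  exact continuous_pi fun i => continuous_finset_sum _ fun j _ =>
    continuous_const.mul (continuous_apply j)

lemma integrable_eval {μ : Measure (Fin n → ℝ)} [IsProbabilityMeasure μ] {N : ℕ∞}
    (hmom : HasMoments μ N) {f : MvPolynomial (Fin n) ℝ} {d : ℕ}
    (hf : DegLE f d) (hd : (d : ℕ∞) < N) :
    Integrable (fun x => eval x f) μ := by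
  have h : (fun x : Fin n → ℝ => eval x f)
      = fun x => ∑ γ ∈ f.support, coeff γ f * ∏ i, x i ^ γ i := funext fun x => eval_eq' x f
  rw [h]
  refine integrable_finset_sum _ fun γ hγ => ?_
  have hγd : (mdeg γ : ℕ∞) < N :=
    lt_of_le_of_lt (by exact_mod_cast hf γ (MvPolynomial.mem_support_iff.mp hγ)) hd
  have hint : Integrable (fun x : Fin n → ℝ => |coeff γ f| * (∑ i, |x i|) ^ (mdeg γ)) μ :=
    (hmom (mdeg γ) hγd).const_mul _
  refine hint.mono' ?_ ?_
  · exact ((continuous_const.mul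
      (continuous_finset_prod _ fun i _ => (continuous_apply i).pow _))).aestronglyMeasurable
  · refine Filter.Eventually.of_forall fun x => ?_
    rw [Real.norm_eq_abs, abs_mul]
    refine mul_le_mul_of_nonneg_left ?_ (abs_nonneg _)
    rw [Finset.abs_prod]
    calc ∏ i, |x i ^ γ i| = ∏ i, |x i| ^ γ i :=
          Finset.prod_congr rfl fun i _ => abs_pow _ _
      _ ≤ ∏ i, (∑ l, |x l|) ^ γ i := by
          refine Finset.prod_le_prod (fun i _ => by positivity) (fun i _ => ?_)
          refine pow_le_pow_left₀ (abs_nonneg _) ?_ _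
          exact Finset.single_le_sum (fun l _ => abs_nonneg (x l)) (Finset.mem_univ i)
      _ = (∑ l, |x l|) ^ (mdeg γ) := by
          rw [Finset.prod_pow_eq_pow_sum]
          rfl

lemma eval_Phi (T : Matrix (Fin m) (Fin n) ℝ) (q : MvPolynomial (Fin m) ℝ) (x : Fin n → ℝ) :
    eval x (Phi T q) = eval (T.mulVec x) q := by
  induction q using MvPolynomial.induction_on with
  | C a => simp [Phi]
  | add f g hf hg => simp [hf, hg]
  | mul_X f i hf =>
    rw [map_mul, eval_mul, eval_mul, hf]
    congr 1
    rw [Phi, aeval_X, eval_X, lin]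
    simp [Matrix.mulVec, dotProduct]

/-! ### Degree bound for Segal families -/

lemma degLE_segal {μ : Measure (Fin n → ℝ)} {N : ℕ∞}
    {p : (Fin n →₀ ℕ) → MvPolynomial (Fin n) ℝ} (hp : IsSegalFamily μ N p) :
    ∀ k : ℕ, ∀ β : Fin n →₀ ℕ, mdeg β = k → (mdeg β : ℕ∞) < N → DegLE (p β) (mdeg β) := by
  intro k
  induction k using Nat.strong_induction_on with
  | _ k ih =>
    intro β hβk hβN γ hγ
    by_cases hγ0 : γ = 0
    · simp [hγ0, mdeg]
    obtain ⟨j, hj⟩ : ∃ j, γ j ≠ 0 := by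
      by_contra hc; push_neg at hc; exact hγ0 (by ext i; simp [hc i])
    set e := γ - Finsupp.single j 1 with hee
    have h2 := coeff_pderiv j (p β) e
    rw [hp.2.1 β hβN j] at h2
    have h3 : e + Finsupp.single j 1 = γ := sub_add_single hj
    rw [h3] at h2
    have h4 : (e j + 1 : ℝ) * coeff γ (p β) ≠ 0 := by
      refine mul_ne_zero (by positivity) hγ
    rw [← h2] at h4
    rw [MvPolynomial.coeff_smul] at h4
    have hβj : β j ≠ 0 := by
      intro hc
      rw [hc] at h4
      simp at h4
    have hcoef : coeff e (p (β - Finsupp.single j 1)) ≠ 0 := by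
      intro hc
      rw [hc] at h4
      simp at h4
    have hmd : mdeg (β - Finsupp.single j 1) + 1 = k := by
      rw [mdeg_sub_single hβj, hβk]
    have hlt : mdeg (β - Finsupp.single j 1) < k := by omega
    have hle : mdeg (β - Finsupp.single j 1) ≤ mdeg β := by omega
    have hNlt : ((mdeg (β - Finsupp.single j 1) : ℕ)  : ℕ∞) < N :=
      lt_of_le_of_lt (by exact_mod_cast hle) hβN
    have := ih _ hlt (β - Finsupp.single j 1) rfl hNlt e hcoef
    have hγe : mdeg γ = mdeg e + 1 := by
      rw [hee, mdeg_sub_single hj]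
    omega


/-! ### Membership in the antidiagonal -/

lemma mem_U {k : ℕ} {β : Fin n →₀ ℕ} :
    β ∈ (Finset.univ : Finset (Fin n)).finsuppAntidiag k ↔ mdeg β = k := by
  rw [Finset.mem_finsuppAntidiag]
  constructor
  · rintro ⟨h, -⟩; exact h
  · intro h; exact ⟨h, Finset.subset_univ _⟩

/-! ### The key induction -/

set_option maxHeartbeats 1000000 in
lemma key {μ : Measure (Fin n → ℝ)} [IsProbabilityMeasure μ] {N : ℕ∞}
    (hmom : HasMoments μ N) (T : Matrix (Fin m) (Fin n) ℝ)
    {p : (Fin n →₀ ℕ) → MvPolynomial (Fin n) ℝ}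
    {pT : (Fin m →₀ ℕ) → MvPolynomial (Fin m) ℝ}
    (hp : IsSegalFamily μ N p) (hpT : IsSegalFamily (μ.map T.mulVec) N pT) :
    ∀ k : ℕ, ∀ α : Fin m →₀ ℕ, mdeg α = k → (mdeg α : ℕ∞) < N →
      Phi T (pT α) = ∑ β ∈ (Finset.univ : Finset (Fin n)).finsuppAntidiag k,
        C (coeff β (Phi T (monomial α 1))) * p β := by
  intro k
  induction k with
  | zero =>
    intro α hα0 _
    have hα : α = 0 := by
      have := Finset.sum_eq_zero_iff.mp hα0
      ext i; simpa using this i (Finset.mem_univ i)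
    subst hα
    rw [hpT.1, map_one]
    have hU : (Finset.univ : Finset (Fin n)).finsuppAntidiag 0 = {0} := by
      ext β
      rw [mem_U, Finset.mem_singleton]
      constructor
      · exact mdeg_eq_zero
      · rintro rfl; simp [mdeg]
    rw [hU, Finset.sum_singleton, hp.1, mul_one]
    have h1 : (monomial (0 : Fin m →₀ ℕ) (1:ℝ)) = 1 := by
      rw [MvPolynomial.monomial_zero', map_one]
    rw [h1, map_one]
    simp
  | succ k ih =>
    intro α hα hαN
    have hαN' : (((k+1 : ℕ)) : ℕ∞) < N := by rw [← hα]; exact hαN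
    have hkN : ((k : ℕ) : ℕ∞) < N :=
      lt_of_le_of_lt (by exact_mod_cast Nat.le_succ k) hαN'
    set U1 := (Finset.univ : Finset (Fin n)).finsuppAntidiag (k+1) with hU1
    set U0 := (Finset.univ : Finset (Fin n)).finsuppAntidiag k with hU0
    set g := Phi T (monomial α 1) with hg
    set RHS := ∑ β ∈ U1, C (coeff β g) * p β with hRHS
    -- coefficient formula for pderiv of g
    have hgder : ∀ j, pderiv j g = ∑ i, C (T i j * (α i : ℝ)) *
        Phi T (monomial (α - Finsupp.single i 1) 1) := by
      intro j
      rw [hg, chain_rule]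
      refine Finset.sum_congr rfl fun i _ => ?_
      rw [pderiv_monomial, one_mul]
      have h1 : (monomial (α - Finsupp.single i 1) ((α i : ℝ)))
          = ((α i : ℝ)) • monomial (α - Finsupp.single i 1) (1:ℝ) := by
        rw [MvPolynomial.smul_monomial, smul_eq_mul, mul_one]
      rw [h1, _root_.map_smul, MvPolynomial.smul_eq_C_mul, ← mul_assoc, ← map_mul]
    have hcoeffder : ∀ (j : Fin n) (β' : Fin n →₀ ℕ), coeff β' (pderiv j g)
        = ∑ i, T i j * (α i : ℝ) *
            coeff β' (Phi T (monomial (α - Finsupp.single i 1) 1)) := by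
      intro j β'
      rw [hgder j, MvPolynomial.coeff_sum]
      exact Finset.sum_congr rfl fun i _ => by rw [coeff_C_mul]
    -- derivative of the left-hand side
    have hLder : ∀ j, pderiv j (Phi T (pT α))
        = ∑ β' ∈ U0, C (coeff β' (pderiv j g)) * p β' := by
      intro j
      rw [chain_rule]
      have hterm : ∀ i : Fin m, C (T i j) * Phi T (pderiv i (pT α))
          = ∑ β' ∈ U0, C (T i j * (α i : ℝ) *
              coeff β' (Phi T (monomial (α - Finsupp.single i 1) 1))) * p β' := by
        intro i
        rw [hpT.2.1 α hαN i]
        by_cases hi : α i = 0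
        · rw [hi]
          simp
        · rw [_root_.map_smul]
          have hsub : mdeg (α - Finsupp.single i 1) = k := by
            have := mdeg_sub_single (β := α) (j := i) hi
            omega
          have hsubN : ((mdeg (α - Finsupp.single i 1) : ℕ) : ℕ∞) < N := by
            rw [hsub]; exact hkN
          rw [ih _ hsub hsubN, Finset.smul_sum, Finset.mul_sum]
          refine Finset.sum_congr rfl fun β' _ => ?_
          rw [MvPolynomial.smul_eq_C_mul, ← mul_assoc, ← mul_assoc, ← map_mul, ← map_mul]
      rw [Finset.sum_congr rfl (fun i _ => hterm i), Finset.sum_comm]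
      refine Finset.sum_congr rfl fun β' _ => ?_
      rw [hcoeffder j β', ← Finset.sum_mul, ← map_sum]
    -- derivative of the right-hand side
    have hRder : ∀ j, pderiv j RHS = ∑ β' ∈ U0, C (coeff β' (pderiv j g)) * p β' := by
      intro j
      classical
      rw [hRHS, map_sum]
      have hterm : ∀ β ∈ U1, pderiv j (C (coeff β g) * p β)
          = C (coeff β g * (β j : ℝ)) * p (β - Finsupp.single j 1) := by
        intro β hβ
        have hβd : mdeg β = k + 1 := mem_U.mp hβ
        have hβN : ((mdeg β : ℕ) : ℕ∞) < N := by rw [hβd]; exact hαN'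
        rw [pderiv_C_mul, hp.2.1 β hβN j, MvPolynomial.smul_eq_C_mul,
          ← mul_assoc, ← map_mul]
      rw [Finset.sum_congr rfl hterm]
      rw [← Finset.sum_filter_of_ne (p := fun β => β j ≠ 0) (by
        intro β _ hne hc
        apply hne
        rw [hc]
        simp)]
      refine Finset.sum_nbij' (i := fun β => β - Finsupp.single j 1)
        (j := fun β' => β' + Finsupp.single j 1) ?_ ?_ ?_ ?_ ?_
      · intro β hβ
        rw [Finset.mem_filter] at hβ
        have hβd : mdeg β = k + 1 := mem_U.mp hβ.1
        show β - Finsupp.single j 1 ∈ U0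
        rw [hU0, mem_U]
        have := mdeg_sub_single (β := β) (j := j) hβ.2
        omega
      · intro β' hβ'
        have hβ'd : mdeg β' = k := mem_U.mp hβ'
        show β' + Finsupp.single j 1 ∈ U1.filter (fun β => β j ≠ 0)
        rw [Finset.mem_filter]
        refine ⟨by rw [hU1, mem_U, mdeg_add, mdeg_single, hβ'd], ?_⟩
        simp
      · intro β hβ
        rw [Finset.mem_filter] at hβ
        show β - Finsupp.single j 1 + Finsupp.single j 1 = β
        exact sub_add_single hβ.2
      · intro β' _
        show β' + Finsupp.single j 1 - Finsupp.single j 1 = β'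
        ext l
        rw [Finsupp.tsub_apply, Finsupp.add_apply]
        omega
      · intro β hβ
        rw [Finset.mem_filter] at hβ
        show C (coeff β g * (β j : ℝ)) * p (β - Finsupp.single j 1)
            = C (coeff (β - Finsupp.single j 1) (pderiv j g)) * p (β - Finsupp.single j 1)
        congr 1
        rw [coeff_pderiv, sub_add_single hβ.2]
        set e := β - Finsupp.single j 1 with he
        have hv : (e j : ℝ) + 1 = (β j : ℝ) := by
          have h5 : e j + 1 = β j := by
            rw [he, Finsupp.tsub_apply, Finsupp.single_eq_same]
            have := hβ.2
            omega
          exact_mod_cast h5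
        rw [hv]
        ring
    -- the difference is a constant
    have hDder : ∀ j, pderiv j (Phi T (pT α) - RHS) = 0 := by
      intro j
      rw [map_sub, hLder j, hRder j, sub_self]
    have hDC := eq_C_of_pderiv_eq_zero hDder
    set c := coeff 0 (Phi T (pT α) - RHS) with hc
    -- integrability of the right-hand side
    have hint : ∀ β ∈ U1, Integrable (fun x => coeff β g * eval x (p β)) μ := by
      intro β hβ
      have hβd : mdeg β = k + 1 := mem_U.mp hβ
      have hβN : ((mdeg β : ℕ) : ℕ∞) < N := by rw [hβd]; exact hαN'
      have := integrable_eval hmom (degLE_segal hp (k+1) β hβd hβN) hβN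
      exact this.const_mul _
    have hevalR : ∀ x, eval x RHS = ∑ β ∈ U1, coeff β g * eval x (p β) := by
      intro x
      rw [hRHS, map_sum]
      exact Finset.sum_congr rfl fun β _ => by rw [eval_mul, eval_C]
    have hIRint : Integrable (fun x => eval x RHS) μ := by
      have h1 : (fun x => eval x RHS) = fun x => ∑ β ∈ U1, coeff β g * eval x (p β) :=
        funext hevalR
      rw [h1]
      exact integrable_finset_sum _ hint
    have hIR : ∫ x, eval x RHS ∂μ = 0 := by
      have h1 : (fun x => eval x RHS) = fun x => ∑ β ∈ U1, coeff β g * eval x (p β) :=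
        funext hevalR
      rw [h1, integral_finset_sum _ hint]
      refine Finset.sum_eq_zero fun β hβ => ?_
      have hβd : mdeg β = k + 1 := mem_U.mp hβ
      have hβN : ((mdeg β : ℕ) : ℕ∞) < N := by rw [hβd]; exact hαN'
      rw [MeasureTheory.integral_const_mul, hp.2.2 β (by omega) hβN, mul_zero]
    -- integral of the left-hand side
    have hIL : ∫ x, eval x (Phi T (pT α)) ∂μ = 0 := by
      have h1 : (fun x => eval x (Phi T (pT α))) = fun x => eval (T.mulVec x) (pT α) :=
        funext fun x => eval_Phi T (pT α) x
      rw [h1]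
      rw [← integral_map ((continuous_mulVec T).measurable.aemeasurable)
        ((continuous_eval (pT α)).aestronglyMeasurable)]
      exact hpT.2.2 α (by omega) hαN
    -- conclude c = 0
    have hval : ∀ x, eval x (Phi T (pT α)) = eval x RHS + c := by
      intro x
      have h1 := congrArg (eval x) hDC
      rw [map_sub, eval_C] at h1
      linarith [h1]
    have hIc : ∫ x, eval x (Phi T (pT α)) ∂μ = c := by
      have h1 : (fun x => eval x (Phi T (pT α))) = fun x => eval x RHS + c :=
        funext hval
      rw [h1, integral_add hIRint (integrable_const c), hIR, integral_const]
      simp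
    have hc0 : c = 0 := by rw [← hIc, hIL]
    rw [hc0, map_zero, sub_eq_zero] at hDC
    exact hDC

end SegalAux

theorem segal_transformation {m n : ℕ} (μ : Measure (Fin n → ℝ)) [IsProbabilityMeasure μ]
    (N : ℕ∞) (hmom : HasMoments μ N) (T : Matrix (Fin m) (Fin n) ℝ)
    (p : (Fin n →₀ ℕ) → MvPolynomial (Fin n) ℝ)
    (pT : (Fin m →₀ ℕ) → MvPolynomial (Fin m) ℝ)
    (hp : IsSegalFamily μ N p)
    (hpT : IsSegalFamily (μ.map T.mulVec) N pT)
    (α : Fin m →₀ ℕ) (hα : (mdeg α : ℕ∞) < N) (x : Fin n → ℝ) :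
    eval (T.mulVec x) (pT α) =
      ∑ᶠ β : Fin n →₀ ℕ,
        if mdeg β = mdeg α then transCoeff T ⇑α ⇑β * eval x (p β) else 0 := by
  classical
  have hkey := SegalAux.key hmom T hp hpT (mdeg α) α rfl hα
  have hL : eval (T.mulVec x) (pT α) = eval x (SegalAux.Phi T (pT α)) :=
    (SegalAux.eval_Phi T (pT α) x).symm
  rw [hL, hkey, map_sum]
  rw [finsum_eq_sum_of_support_subset _
    (s := (Finset.univ : Finset (Fin n)).finsuppAntidiag (mdeg α)) (by
      intro β hβ
      simp only [Function.mem_support] at hβ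
      by_cases hc : mdeg β = mdeg α
      · exact Finset.mem_coe.mpr (SegalAux.mem_U.mpr hc)
      · exact absurd (if_neg hc) hβ)]
  refine Finset.sum_congr rfl fun β hβ => ?_
  have hβd : mdeg β = mdeg α := SegalAux.mem_U.mp hβ
  rw [if_pos hβd, SegalAux.transCoeff_eq T α β, eval_mul, eval_C]


end
end

section
/- Multinomial formula for Wick monomials: if X = (X₁,…,X_n) is a vector of random variables with finite moments of order < N, c ∈ ℝ^n, and Y = c₁X₁ + ⋯ + c_nX_n, then for every 0 ≤ k < N, :Y^k: = Σ_{β ∈ ℕ^n, |β| = k} (k!/β!) c^β :X^β: almost surely. -/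
open MeasureTheory MvPolynomial

noncomputable section

def IsAppellFamily (μ : Measure ℝ) (N : ℕ∞) (p : ℕ → Polynomial ℝ) : Prop :=
  p 0 = 1 ∧
  (∀ k : ℕ, ((k + 1 : ℕ) : ℕ∞) < N → Polynomial.derivative (p (k + 1)) = ((k : ℝ) + 1) • p k) ∧
  (∀ k : ℕ, 0 < k → (k : ℕ∞) < N → ∫ x, (p k).eval x ∂μ = 0)

/-! ### Auxiliary lemmas -/

lemma coeff_pderiv' {σ : Type*} [DecidableEq σ] (j : σ) (f : MvPolynomial σ ℝ) (m : σ →₀ ℕ) :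
    coeff m (pderiv j f) = ((m j : ℝ) + 1) * coeff (m + Finsupp.single j 1) f := by
  induction f using MvPolynomial.induction_on' with
  | monomial s a =>
    rw [pderiv_monomial, coeff_monomial, coeff_monomial]
    rcases Nat.eq_zero_or_pos (s j) with h0 | hpos
    · have h1 : s - Finsupp.single j 1 = s := by
        ext i; rcases eq_or_ne i j with rfl | hij <;>
          simp [Finsupp.single_apply, Ne.symm, h0, *]
      rw [h1]
      have h2 : ¬ s = m + Finsupp.single j 1 := by
        intro h; apply absurd h0
        simp [h]
      rw [if_neg h2]
      split_ifs with h3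
      · subst h3; simp [h0]
      · ring
    · have hiff : s - Finsupp.single j 1 = m ↔ s = m + Finsupp.single j 1 := by
        constructor
        · intro h; ext i
          have h2 := DFunLike.congr_fun h i
          rw [Finsupp.tsub_apply, Finsupp.single_apply] at h2
          rw [Finsupp.add_apply, Finsupp.single_apply]
          rcases eq_or_ne j i with rfl | hij
          · simp at h2 ⊢; omega
          · simp only [if_neg hij] at h2 ⊢; omega
        · intro h; subst h; ext i
          rw [Finsupp.tsub_apply, Finsupp.add_apply, Finsupp.single_apply]
          rcases eq_or_ne j i with rfl | hij
          · simp
          · simp [if_neg hij]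
      split_ifs with h1 h2 h2
      · have : s j = m j + 1 := by subst h2; simp
        rw [this]; push_cast; ring
      · exact absurd (hiff.1 h1) h2
      · exact absurd (hiff.2 h2) h1
      · ring
  | add p q hp hq => simp only [map_add, coeff_add, hp, hq]; ring

lemma eq_C_of_pderiv_zero {σ : Type*} [DecidableEq σ] (f : MvPolynomial σ ℝ)
    (h : ∀ j, pderiv j f = 0) : f = C (coeff 0 f) := by
  ext m
  rcases eq_or_ne m 0 with rfl | hm
  · simp
  · obtain ⟨j, hj⟩ : ∃ j, m j ≠ 0 := by
      by_contra hc; push_neg at hc; exact hm (Finsupp.ext hc)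
    have h5 := coeff_pderiv' j f (m - Finsupp.single j 1)
    rw [h j] at h5
    have hms : m - Finsupp.single j 1 + Finsupp.single j 1 = m := by
      ext i
      rw [Finsupp.add_apply, Finsupp.tsub_apply, Finsupp.single_apply]
      rcases eq_or_ne j i with rfl | hij
      · simp; omega
      · simp [if_neg hij]
    rw [hms] at h5
    have hpos : (0 : ℝ) < (((m - Finsupp.single j 1 : _ →₀ ℕ) j : ℕ) : ℝ) + 1 := by positivity
    have h6 : coeff m f = 0 := by
      rcases mul_eq_zero.1 h5.symm with h' | h'
      · exact absurd h' hpos.ne'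
      · exact h'
    rw [h6, coeff_C, if_neg (by simpa using (Ne.symm hm))]

lemma sum_sub_single {σ : Type*} [Fintype σ] [DecidableEq σ] (m : σ →₀ ℕ) (j : σ) (hj : m j ≠ 0) :
    (∑ i, (m - Finsupp.single j 1 : σ →₀ ℕ) i) + 1 = ∑ i, m i := by
  have key : ∀ i, m i = (m - Finsupp.single j 1 : σ →₀ ℕ) i + Finsupp.single j 1 i := by
    intro i
    rw [Finsupp.tsub_apply, Finsupp.single_apply]
    rcases eq_or_ne j i with rfl | hij
    · simp; omega
    · simp [if_neg hij]
  rw [Finset.sum_congr rfl (fun i _ => key i), Finset.sum_add_distrib]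
  congr 1
  simp [Finsupp.single_apply]

lemma totalDegree_le_succ_of_pderiv {σ : Type*} [Fintype σ] [DecidableEq σ]
    (f : MvPolynomial σ ℝ) (d : ℕ) (h : ∀ j, (pderiv j f).totalDegree ≤ d) :
    f.totalDegree ≤ d + 1 := by
  rw [totalDegree]
  apply Finset.sup_le
  intro m hm
  rw [Finsupp.sum_fintype _ _ (fun _ => rfl)]
  by_contra hc
  push_neg at hc
  obtain ⟨j, hj⟩ : ∃ j, m j ≠ 0 := by
    by_contra h0; push_neg at h0
    simp [Finset.sum_congr rfl fun i _ => h0 i] at hc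
  have hcm : coeff m f ≠ 0 := MvPolynomial.mem_support_iff.1 hm
  have key : coeff (m - Finsupp.single j 1) (pderiv j f) ≠ 0 := by
    rw [coeff_pderiv']
    have hms : (m - Finsupp.single j 1 : σ →₀ ℕ) + Finsupp.single j 1 = m := by
      ext i
      rw [Finsupp.add_apply, Finsupp.tsub_apply, Finsupp.single_apply]
      rcases eq_or_ne j i with rfl | hij
      · simp; omega
      · simp [if_neg hij]
    rw [hms]
    exact mul_ne_zero (by positivity) hcm
  have h2 : ((m - Finsupp.single j 1 : σ →₀ ℕ).sum fun _ e => e) ≤ d :=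
    le_trans (le_totalDegree (MvPolynomial.mem_support_iff.2 key)) (h j)
  rw [Finsupp.sum_fintype _ _ (fun _ => rfl)] at h2
  have h3 := sum_sub_single m j hj
  omega

lemma mdeg_zero_iff' {σ : Type*} [Fintype σ] (β : σ →₀ ℕ) (h : ∑ i, β i = 0) : β = 0 := by
  ext i
  have := Finset.sum_eq_zero_iff.1 h i (Finset.mem_univ i)
  simpa using this

lemma integrable_eval_of_totalDegree {n : ℕ} (μ : Measure (Fin n → ℝ)) [IsProbabilityMeasure μ]
    (N : ℕ∞) (hmom : ∀ k : ℕ, (k : ℕ∞) < N → Integrable (fun x : Fin n → ℝ => (∑ i, |x i|) ^ k) μ)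
    (f : MvPolynomial (Fin n) ℝ) (k : ℕ) (hd : f.totalDegree ≤ k) (hk : (k : ℕ∞) < N) :
    Integrable (fun x => eval x f) μ := by
  have heq : (fun x : Fin n → ℝ => eval x f)
      = fun x => ∑ m ∈ f.support, coeff m f * ∏ i, x i ^ m i := by
    funext x
    conv_lhs => rw [← support_sum_monomial_coeff f]
    rw [map_sum]
    refine Finset.sum_congr rfl fun m _ => ?_
    rw [eval_monomial, Finsupp.prod_fintype _ _ (fun _ => pow_zero _)]
  rw [heq]
  apply integrable_finset_sum
  intro m hm
  apply Integrable.const_mul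
  have hmeas : Measurable fun x : Fin n → ℝ => ∏ i, x i ^ m i :=
    Finset.measurable_prod _ fun i _ => (measurable_pi_apply i).pow_const (m i)
  have hmdeg : (∑ i, m i) ≤ k := by
    have := le_totalDegree hm
    rw [Finsupp.sum_fintype _ _ (fun _ => rfl)] at this
    exact le_trans this hd
  refine Integrable.mono' ((integrable_const (1:ℝ)).add (hmom k hk)) hmeas.aestronglyMeasurable
    (Filter.Eventually.of_forall fun x => ?_)
  have hs : (0:ℝ) ≤ ∑ i, |x i| := Finset.sum_nonneg fun i _ => abs_nonneg _
  have h1 : ‖∏ i, x i ^ m i‖ = ∏ i, |x i| ^ m i := by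
    rw [Real.norm_eq_abs, Finset.abs_prod]
    exact Finset.prod_congr rfl fun i _ => abs_pow _ _
  rw [h1]
  have h2 : ∏ i, |x i| ^ m i ≤ (∑ i, |x i|) ^ (∑ i, m i) := by
    rw [← Finset.prod_pow_eq_pow_sum]
    exact Finset.prod_le_prod (fun i _ => pow_nonneg (abs_nonneg _) _)
      (fun i _ => pow_le_pow_left₀ (abs_nonneg _)
        (Finset.single_le_sum (fun i _ => abs_nonneg (x i)) (Finset.mem_univ i)) _)
  refine le_trans h2 ?_
  rcases le_or_gt (∑ i, |x i|) 1 with hle | hgt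
  · calc (∑ i, |x i|) ^ (∑ i, m i) ≤ 1 := pow_le_one₀ hs hle
      _ ≤ 1 + (∑ i, |x i|) ^ k := le_add_of_nonneg_right (pow_nonneg hs _)
  · calc (∑ i, |x i|) ^ (∑ i, m i) ≤ (∑ i, |x i|) ^ k := pow_le_pow_right₀ hgt.le hmdeg
      _ ≤ 1 + (∑ i, |x i|) ^ k := le_add_of_nonneg_left zero_le_one

lemma pderiv_L {n : ℕ} (c : Fin n → ℝ) (j : Fin n) :
    pderiv j (∑ i, C (c i) * X i : MvPolynomial (Fin n) ℝ) = C (c j) := by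
  rw [map_sum]
  rw [Finset.sum_eq_single j]
  · rw [pderiv_C_mul, pderiv_X_self, mul_one]
  · intro i _ hij
    rw [pderiv_C_mul, pderiv_X_of_ne hij, mul_zero]
  · intro h; exact absurd (Finset.mem_univ j) h

lemma pderiv_polyaeval {n : ℕ} (c : Fin n → ℝ) (f : Polynomial ℝ) (j : Fin n) :
    pderiv j (Polynomial.aeval (∑ i, C (c i) * X i : MvPolynomial (Fin n) ℝ) f)
      = Polynomial.aeval (∑ i, C (c i) * X i : MvPolynomial (Fin n) ℝ)
          (Polynomial.derivative f) * C (c j) := by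
  set L : MvPolynomial (Fin n) ℝ := ∑ i, C (c i) * X i with hL
  induction f using Polynomial.induction_on' with
  | add p q hp hq =>
    simp only [Polynomial.derivative_add, map_add, hp, hq]; ring
  | monomial m a =>
    rw [Polynomial.aeval_monomial, Polynomial.derivative_monomial, Polynomial.aeval_monomial]
    have halg : (algebraMap ℝ (MvPolynomial (Fin n) ℝ)) = C := rfl
    rw [halg, pderiv_C_mul, pderiv_pow, pderiv_L]
    have : ((m : MvPolynomial (Fin n) ℝ)) = C (m : ℝ) := by
      rw [map_natCast]
    rw [this, map_mul]
    ring

lemma coef_step {n : ℕ} (k : ℕ) (c : Fin n → ℝ) (β : Fin n →₀ ℕ) (j : Fin n) (hj : β j ≠ 0) :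
    ((((k+1).factorial : ℕ) : ℝ) / (∏ i, (((β i).factorial : ℕ) : ℝ)) * ∏ i, c i ^ β i) * (β j : ℝ)
      = ((k : ℝ) + 1) * c j *
        (((k.factorial : ℕ) : ℝ) / (∏ i, ((((β - Finsupp.single j 1 : Fin n →₀ ℕ) i).factorial : ℕ) : ℝ))
          * ∏ i, c i ^ ((β - Finsupp.single j 1 : Fin n →₀ ℕ) i)) := by
  have hsub : ∀ i, i ≠ j → (β - Finsupp.single j 1 : Fin n →₀ ℕ) i = β i := by
    intro i hij
    rw [Finsupp.tsub_apply, Finsupp.single_apply, if_neg (Ne.symm hij)]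
    simp
  have hsubj : (β - Finsupp.single j 1 : Fin n →₀ ℕ) j = β j - 1 := by
    rw [Finsupp.tsub_apply, Finsupp.single_apply, if_pos rfl]
  obtain ⟨m, hm⟩ := Nat.exists_eq_succ_of_ne_zero hj
  set A := ∏ i ∈ Finset.univ.erase j, (((β i).factorial : ℕ) : ℝ) with hA
  set B := ∏ i ∈ Finset.univ.erase j, c i ^ β i with hB
  have hApos : 0 < A := Finset.prod_pos fun i _ => by exact_mod_cast (β i).factorial_pos
  have e0 : (∏ i, (((β i).factorial : ℕ) : ℝ)) = ((β j).factorial : ℝ) * A :=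
    (Finset.mul_prod_erase Finset.univ (fun i => (((β i).factorial : ℕ) : ℝ)) (Finset.mem_univ j)).symm
  have e0' : (∏ i, c i ^ β i) = c j ^ β j * B :=
    (Finset.mul_prod_erase Finset.univ (fun i => c i ^ β i) (Finset.mem_univ j)).symm
  have e1 : (∏ i, ((((β - Finsupp.single j 1 : Fin n →₀ ℕ) i).factorial : ℕ) : ℝ))
      = (m.factorial : ℝ) * A := by
    rw [← Finset.mul_prod_erase Finset.univ _ (Finset.mem_univ j), hsubj, hm]
    congr 1
    exact Finset.prod_congr rfl fun i hi => by
      simp [Finsupp.single_apply, Ne.symm (Finset.ne_of_mem_erase hi)]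
  have e2 : (∏ i, c i ^ ((β - Finsupp.single j 1 : Fin n →₀ ℕ) i)) = c j ^ m * B := by
    rw [← Finset.mul_prod_erase Finset.univ _ (Finset.mem_univ j), hsubj, hm]
    congr 1
    exact Finset.prod_congr rfl fun i hi => by
      simp [Finsupp.single_apply, Ne.symm (Finset.ne_of_mem_erase hi)]
  rw [e0, e0', e1, e2, hm]
  have hfac : ((m+1).factorial : ℝ) = (m+1) * (m.factorial : ℝ) := by
    rw [Nat.factorial_succ]; push_cast; ring
  have hfack : ((k+1).factorial : ℝ) = (k+1) * (k.factorial : ℝ) := by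
    rw [Nat.factorial_succ]; push_cast; ring
  have hmf : ((m.factorial : ℕ) : ℝ) ≠ 0 := by exact_mod_cast m.factorial_pos.ne'
  rw [hfac, hfack]
  rw [show m.succ = m + 1 from rfl, pow_succ]
  push_cast
  field_simp

lemma pderiv_wick_sum {n : ℕ} (c : Fin n → ℝ) (p : (Fin n →₀ ℕ) → MvPolynomial (Fin n) ℝ)
    (N : ℕ∞)
    (hpd : ∀ β : Fin n →₀ ℕ, (mdeg β : ℕ∞) < N → ∀ j : Fin n,
      pderiv j (p β) = ((β j : ℕ) : ℝ) • p (β - Finsupp.single j 1))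
    (k : ℕ) (hk : ((k+1 : ℕ) : ℕ∞) < N) (j : Fin n) :
    pderiv j (∑ β ∈ Finset.finsuppAntidiag (Finset.univ : Finset (Fin n)) (k+1),
        C ((((k+1).factorial : ℕ) : ℝ) / (∏ i, (((β i).factorial : ℕ) : ℝ)) * ∏ i, c i ^ β i) * p β)
      = C (((k : ℝ) + 1) * c j) * ∑ β ∈ Finset.finsuppAntidiag (Finset.univ : Finset (Fin n)) k,
        C (((k.factorial : ℕ) : ℝ) / (∏ i, (((β i).factorial : ℕ) : ℝ)) * ∏ i, c i ^ β i) * p β := by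
  classical
  rw [map_sum, Finset.mul_sum]
  have hterm : ∀ β ∈ Finset.finsuppAntidiag (Finset.univ : Finset (Fin n)) (k+1),
      pderiv j (C ((((k+1).factorial : ℕ) : ℝ) / (∏ i, (((β i).factorial : ℕ) : ℝ)) * ∏ i, c i ^ β i) * p β)
        = C (((((k+1).factorial : ℕ) : ℝ) / (∏ i, (((β i).factorial : ℕ) : ℝ)) * ∏ i, c i ^ β i) * (β j : ℝ))
            * p (β - Finsupp.single j 1) := by
    intro β hβ
    have hβd : mdeg β = k + 1 := (Finset.mem_finsuppAntidiag.1 hβ).1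
    rw [pderiv_C_mul, hpd β (by rw [hβd]; exact_mod_cast hk) j,
        MvPolynomial.smul_eq_C_mul, ← mul_assoc, ← C_mul]
  rw [Finset.sum_congr rfl hterm]
  rw [← Finset.sum_filter_of_ne (p := fun β => β j ≠ 0) (by
    intro x hx hfx
    by_contra h0
    apply hfx
    rw [h0]
    push_cast
    rw [mul_zero, map_zero, zero_mul])]
  refine Finset.sum_nbij' (fun β => β - Finsupp.single j 1) (fun γ => γ + Finsupp.single j 1)
    ?_ ?_ ?_ ?_ ?_
  · intro β hβ
    obtain ⟨hβm, hβj⟩ := Finset.mem_filter.1 hβ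
    obtain ⟨hsum, _⟩ := Finset.mem_finsuppAntidiag.1 hβm
    rw [Finset.mem_finsuppAntidiag]
    refine ⟨?_, Finset.subset_univ _⟩
    show (∑ i, (β - Finsupp.single j 1 : Fin n →₀ ℕ) i) = k
    have := sum_sub_single β j hβj
    have hsum' : (∑ i, β i) = k + 1 := hsum
    omega
  · intro γ hγ
    obtain ⟨hsum, _⟩ := Finset.mem_finsuppAntidiag.1 hγ
    rw [Finset.mem_filter, Finset.mem_finsuppAntidiag]
    have hsum' : (∑ i, γ i) = k := hsum
    refine ⟨⟨?_, Finset.subset_univ _⟩, ?_⟩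
    · have h7 : (∑ i, (γ + Finsupp.single j 1 : Fin n →₀ ℕ) i)
          = (∑ i, γ i) + ∑ i, Finsupp.single j 1 i := by
        rw [← Finset.sum_add_distrib]
        exact Finset.sum_congr rfl fun i _ => Finsupp.add_apply γ (Finsupp.single j 1) i
      show (∑ i, (γ + Finsupp.single j 1 : Fin n →₀ ℕ) i) = k + 1
      rw [h7, hsum']
      congr 1
      simp [Finsupp.single_apply]
    · rw [Finsupp.add_apply]
      simp
  · intro β hβ
    obtain ⟨_, hβj⟩ := Finset.mem_filter.1 hβ
    ext i
    rw [Finsupp.add_apply, Finsupp.tsub_apply, Finsupp.single_apply]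
    rcases eq_or_ne j i with rfl | hij
    · simp; omega
    · simp [if_neg hij]
  · intro γ _
    ext i
    rw [Finsupp.tsub_apply, Finsupp.add_apply, Finsupp.single_apply]
    rcases eq_or_ne j i with rfl | hij
    · simp
    · simp [if_neg hij]
  · intro β hβ
    obtain ⟨_, hβj⟩ := Finset.mem_filter.1 hβ
    rw [← mul_assoc, ← C_mul, coef_step k c β j hβj]

lemma eval_aeval_L {n : ℕ} (c x : Fin n → ℝ) (f : Polynomial ℝ) :
    eval x (Polynomial.aeval (∑ i, C (c i) * X i : MvPolynomial (Fin n) ℝ) f)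
      = Polynomial.eval (∑ i, c i * x i) f := by
  have h1 : (eval x) (Polynomial.aeval (∑ i, C (c i) * X i : MvPolynomial (Fin n) ℝ) f)
      = (MvPolynomial.aeval x) (Polynomial.aeval (∑ i, C (c i) * X i : MvPolynomial (Fin n) ℝ) f) := by
    rw [MvPolynomial.aeval_def, MvPolynomial.eval]
    rfl
  rw [h1, ← Polynomial.aeval_algHom_apply]
  simp [Polynomial.aeval_def, mul_comm]

lemma segal_appell_key {n : ℕ} (μ : Measure (Fin n → ℝ)) [IsProbabilityMeasure μ] (N : ℕ∞)
    (hmomμ : ∀ m : ℕ, (m : ℕ∞) < N → Integrable (fun x : Fin n → ℝ => (∑ i, |x i|) ^ m) μ)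
    (c : Fin n → ℝ) (p : (Fin n →₀ ℕ) → MvPolynomial (Fin n) ℝ) (q : ℕ → Polynomial ℝ)
    (hp0 : p 0 = 1)
    (hpd : ∀ β : Fin n →₀ ℕ, (mdeg β : ℕ∞) < N → ∀ j : Fin n,
        pderiv j (p β) = ((β j : ℕ) : ℝ) • p (β - Finsupp.single j 1))
    (hpi : ∀ β : Fin n →₀ ℕ, 0 < mdeg β → (mdeg β : ℕ∞) < N → ∫ x, eval x (p β) ∂μ = 0)
    (hq0 : q 0 = 1)
    (hqd : ∀ m : ℕ, ((m + 1 : ℕ) : ℕ∞) < N →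
        Polynomial.derivative (q (m + 1)) = ((m : ℝ) + 1) • q m)
    (hqi : ∀ m : ℕ, 0 < m → (m : ℕ∞) < N → ∫ x, (q m).eval (∑ i, c i * x i) ∂μ = 0)
    (m : ℕ) (hm : (m : ℕ∞) < N) :
    Polynomial.aeval (∑ i, C (c i) * X i : MvPolynomial (Fin n) ℝ) (q m)
      = ∑ β ∈ Finset.finsuppAntidiag (Finset.univ : Finset (Fin n)) m,
          C (((m.factorial : ℕ) : ℝ) / (∏ i, (((β i).factorial : ℕ) : ℝ)) * ∏ i, c i ^ β i)
            * p β := by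
  classical
  -- total degree bound for Segal polynomials
  have hptd : ∀ d : ℕ, (d : ℕ∞) < N → ∀ β, mdeg β = d → (p β).totalDegree ≤ d := by
    intro d
    induction d with
    | zero =>
      intro _ β hβ
      have hβ0 : β = 0 := mdeg_zero_iff' β hβ
      rw [hβ0, hp0]
      simp [totalDegree_one]
    | succ d ih =>
      intro hd β hβ
      have hdN : (d : ℕ∞) < N := lt_trans (by exact_mod_cast Nat.lt_succ_self d) hd
      refine totalDegree_le_succ_of_pderiv _ d fun j => ?_
      rw [hpd β (by rw [hβ]; exact hd) j]
      rcases eq_or_ne (β j) 0 with h0 | h0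
      · rw [h0]; simp
      · refine le_trans (totalDegree_smul_le _ _) (ih hdN _ ?_)
        have h1 := sum_sub_single β j h0
        have hβ' : (∑ i, β i) = d + 1 := hβ
        show (∑ i, (β - Finsupp.single j 1 : Fin n →₀ ℕ) i) = d
        omega
  revert hm
  induction m with
  | zero =>
    intro _
    rw [hq0, map_one]
    have hA0 : Finset.finsuppAntidiag (Finset.univ : Finset (Fin n)) 0 = {0} := by
      ext β
      rw [Finset.mem_finsuppAntidiag, Finset.mem_singleton]
      constructor
      · rintro ⟨h1, _⟩
        exact mdeg_zero_iff' β h1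
      · rintro rfl
        exact ⟨by simp, by simp⟩
    rw [hA0, Finset.sum_singleton, hp0]
    norm_num [Nat.factorial]
  | succ m ih =>
    intro hm
    have hmN : (m : ℕ∞) < N := lt_trans (by exact_mod_cast Nat.lt_succ_self m) hm
    have ih' := ih hmN
    set L : MvPolynomial (Fin n) ℝ := ∑ i, C (c i) * X i with hLdef
    set R1 : MvPolynomial (Fin n) ℝ :=
      ∑ β ∈ Finset.finsuppAntidiag (Finset.univ : Finset (Fin n)) (m+1),
        C ((((m+1).factorial : ℕ) : ℝ) / (∏ i, (((β i).factorial : ℕ) : ℝ)) * ∏ i, c i ^ β i)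
          * p β with hR1
    set D : MvPolynomial (Fin n) ℝ := Polynomial.aeval L (q (m+1)) - R1 with hD
    have hDp : ∀ j, pderiv j D = 0 := by
      intro j
      rw [hD, map_sub, pderiv_polyaeval, hqd m hm, hR1,
          pderiv_wick_sum c p N hpd m hm j, ← hLdef, _root_.map_smul, ih']
      rw [MvPolynomial.smul_eq_C_mul, C_mul]
      ring
    have hDc : D = C (coeff 0 D) := eq_C_of_pderiv_zero D hDp
    have hint : ∀ β ∈ Finset.finsuppAntidiag (Finset.univ : Finset (Fin n)) (m+1),
        Integrable (fun x => eval x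
          (C ((((m+1).factorial : ℕ) : ℝ) / (∏ i, (((β i).factorial : ℕ) : ℝ))
            * ∏ i, c i ^ β i) * p β)) μ := by
      intro β hβ
      have hβd : mdeg β = m+1 := (Finset.mem_finsuppAntidiag.1 hβ).1
      refine integrable_eval_of_totalDegree μ N hmomμ _ (m+1) ?_ hm
      rw [C_mul']
      exact le_trans (totalDegree_smul_le _ _) (hptd (m+1) hm β hβd)
    have hreq : (fun x : Fin n → ℝ => eval x R1)
        = fun x => ∑ β ∈ Finset.finsuppAntidiag (Finset.univ : Finset (Fin n)) (m+1),
            eval x (C ((((m+1).factorial : ℕ) : ℝ) / (∏ i, (((β i).factorial : ℕ) : ℝ))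
              * ∏ i, c i ^ β i) * p β) := by
      funext x
      rw [hR1, map_sum]
    have hrint : Integrable (fun x => eval x R1) μ := by
      rw [hreq]
      exact integrable_finset_sum _ hint
    have hrI : ∫ x, eval x R1 ∂μ = 0 := by
      rw [hreq, integral_finset_sum _ hint]
      refine Finset.sum_eq_zero fun β hβ => ?_
      have hβd : mdeg β = m+1 := (Finset.mem_finsuppAntidiag.1 hβ).1
      have h8 : (fun x : Fin n → ℝ => eval x
          (C ((((m+1).factorial : ℕ) : ℝ) / (∏ i, (((β i).factorial : ℕ) : ℝ))
            * ∏ i, c i ^ β i) * p β))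
          = fun x => ((((m+1).factorial : ℕ) : ℝ) / (∏ i, (((β i).factorial : ℕ) : ℝ))
            * ∏ i, c i ^ β i) * eval x (p β) := by
        funext x
        rw [map_mul, eval_C]
      rw [h8, MeasureTheory.integral_const_mul, hpi β (by omega) (by rw [hβd]; exact hm), mul_zero]
    have hQI : ∫ x, eval x (Polynomial.aeval L (q (m+1))) ∂μ = 0 := by
      have h9 : (fun x : Fin n → ℝ => eval x (Polynomial.aeval L (q (m+1))))
          = fun x => (q (m+1)).eval (∑ i, c i * x i) := by
        funext x
        exact eval_aeval_L c x (q (m+1))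
      rw [h9]
      exact hqi (m+1) (Nat.succ_pos m) hm
    have ha : coeff 0 D = 0 := by
      have h2 : ∀ x : Fin n → ℝ, eval x (Polynomial.aeval L (q (m+1)))
          = eval x R1 + coeff 0 D := by
        intro x
        have h3 := congrArg (eval x) hDc
        rw [hD, map_sub, eval_C] at h3
        rw [← hD] at h3
        linarith [h3]
      have h4 : ∫ x, eval x (Polynomial.aeval L (q (m+1))) ∂μ
          = ∫ x, (eval x R1 + coeff 0 D) ∂μ := by
        congr 1
        funext x
        exact h2 x
      rw [hQI, integral_add hrint (integrable_const _), hrI, integral_const] at h4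
      simpa using h4.symm
    have hD0 : D = 0 := by
      rw [hDc, ha, map_zero]
    rw [hD] at hD0
    rw [sub_eq_zero.1 hD0, hR1]


theorem wick_multinomial {n : ℕ} {Ω : Type*} [MeasurableSpace Ω]
    (P : Measure Ω) [IsProbabilityMeasure P]
    (X : Ω → Fin n → ℝ) (hX : Measurable X) (N : ℕ∞)
    (hmom : ∀ k : ℕ, (k : ℕ∞) < N → Integrable (fun ω => (∑ i, |X ω i|) ^ k) P)
    (c : Fin n → ℝ)
    (p : (Fin n →₀ ℕ) → MvPolynomial (Fin n) ℝ) (q : ℕ → Polynomial ℝ)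
    (hp : IsSegalFamily (P.map X) N p)
    (hq : IsAppellFamily (P.map (fun ω => ∑ i, c i * X ω i)) N q)
    (k : ℕ) (hk : (k : ℕ∞) < N) :
    ∀ᵐ ω ∂P, (q k).eval (∑ i, c i * X ω i) =
      ∑ᶠ β : Fin n →₀ ℕ,
        if mdeg β = k then
          ((Nat.factorial k : ℕ) : ℝ) / ((∏ i, Nat.factorial (β i) : ℕ) : ℝ) *
            (∏ i, c i ^ β i) * eval (X ω) (p β)
        else 0 := by
  classical
  obtain ⟨hp0, hpd, hpi⟩ := hp
  obtain ⟨hq0, hqd, hqi⟩ := hq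
  have hY : Measurable fun ω => ∑ i, c i * X ω i :=
    Finset.measurable_sum _ fun i _ => measurable_const.mul ((measurable_pi_apply i).comp hX)
  haveI : IsProbabilityMeasure (P.map X) := Measure.isProbabilityMeasure_map hX.aemeasurable
  have hmomμ : ∀ m : ℕ, (m : ℕ∞) < N →
      Integrable (fun x : Fin n → ℝ => (∑ i, |x i|) ^ m) (P.map X) := by
    intro m hm
    have hcont : Continuous fun x : Fin n → ℝ => (∑ i, |x i|) ^ m := by continuity
    exact (integrable_map_measure hcont.aestronglyMeasurable hX.aemeasurable).2 (hmom m hm)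
  have hcq : ∀ m : ℕ, Continuous fun x : Fin n → ℝ => (q m).eval (∑ i, c i * x i) := by
    intro m
    exact (q m).continuous_aeval.comp (by continuity)
  have hqi' : ∀ m : ℕ, 0 < m → (m : ℕ∞) < N →
      ∫ x, (q m).eval (∑ i, c i * x i) ∂(P.map X) = 0 := by
    intro m h1 h2
    have e1 : ∫ x, (q m).eval (∑ i, c i * x i) ∂(P.map X)
        = ∫ ω, (q m).eval (∑ i, c i * X ω i) ∂P :=
      integral_map hX.aemeasurable (hcq m).aestronglyMeasurable
    have e2 : ∫ y, (q m).eval y ∂(P.map (fun ω => ∑ i, c i * X ω i))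
        = ∫ ω, (q m).eval (∑ i, c i * X ω i) ∂P :=
      integral_map hY.aemeasurable (q m).continuous_aeval.aestronglyMeasurable
    rw [e1, ← e2]
    exact hqi m h1 h2
  have hkey := segal_appell_key (P.map X) N hmomμ c p q hp0 hpd hpi hq0 hqd hqi' k hk
  refine Filter.Eventually.of_forall fun ω => ?_
  have hsupp : (Function.support fun β : Fin n →₀ ℕ =>
      if mdeg β = k then
        ((Nat.factorial k : ℕ) : ℝ) / ((∏ i, Nat.factorial (β i) : ℕ) : ℝ) *
          (∏ i, c i ^ β i) * eval (X ω) (p β)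
      else 0)
      ⊆ ↑(Finset.finsuppAntidiag (Finset.univ : Finset (Fin n)) k) := by
    intro β hβ
    rw [Function.mem_support] at hβ
    rw [Finset.mem_coe, Finset.mem_finsuppAntidiag]
    by_contra hc
    apply hβ
    rw [if_neg]
    intro hdeg
    exact hc ⟨hdeg, Finset.subset_univ _⟩
  rw [finsum_eq_finset_sum_of_support_subset _ hsupp]
  rw [show (q k).eval (∑ i, c i * X ω i)
      = eval (X ω) (Polynomial.aeval
          (∑ i, C (c i) * MvPolynomial.X i : MvPolynomial (Fin n) ℝ) (q k))
    from (eval_aeval_L c (X ω) (q k)).symm, hkey, map_sum]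
  refine Finset.sum_congr rfl fun β hβ => ?_
  have hβd : mdeg β = k := (Finset.mem_finsuppAntidiag.1 hβ).1
  rw [if_pos hβd, map_mul, eval_C, Nat.cast_prod]

end
end

section
/- Robustness of Wick ordering under linear substitution: let X = (X₁,…,X_n) be a random vector with sufficiently many finite moments, T ∈ M_{m×n}(ℝ), Y = TX, and let q, p be real polynomials in n and m variables respectively with q(x) = p(Tx) for all x ∈ ℝ^n. Then :q(X): = :p(Y): almost surely. -/
open MeasureTheory MvPolynomial

noncomputable section

set_option linter.unusedSectionVars false
set_option linter.unusedVariables false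

namespace WickAux
variable {ι : Type*} [Fintype ι] [DecidableEq ι]

def W (p : (ι →₀ ℕ) → MvPolynomial ι ℝ) : MvPolynomial ι ℝ →ₗ[ℝ] MvPolynomial ι ℝ where
  toFun q := ∑ β ∈ q.support, q.coeff β • p β
  map_add' q₁ q₂ := by
    show Finsupp.sum (AddMonoidAlgebra.coeff (q₁ + q₂)) (fun β c => c • p β) =
      Finsupp.sum (AddMonoidAlgebra.coeff q₁) (fun β c => c • p β) + Finsupp.sum (AddMonoidAlgebra.coeff q₂) (fun β c => c • p β)
    rw [AddMonoidAlgebra.coeff_add]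
    exact Finsupp.sum_add_index' (fun β => zero_smul ℝ (p β)) (fun β c d => add_smul c d (p β))
  map_smul' a q := by
    show Finsupp.sum (AddMonoidAlgebra.coeff (a • q)) (fun β c => c • p β) = a • Finsupp.sum (AddMonoidAlgebra.coeff q) (fun β c => c • p β)
    rw [AddMonoidAlgebra.coeff_smul]
    rw [Finsupp.sum_smul_index' (fun β => zero_smul ℝ (p β)), Finsupp.smul_sum]
    simp [smul_smul]

lemma W_apply (p : (ι →₀ ℕ) → MvPolynomial ι ℝ) (q : MvPolynomial ι ℝ) :
    W p q = ∑ β ∈ q.support, q.coeff β • p β := rfl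

lemma W_monomial (p : (ι →₀ ℕ) → MvPolynomial ι ℝ) (β : ι →₀ ℕ) (c : ℝ) :
    W p (monomial β c) = c • p β := by
  rcases eq_or_ne c 0 with h | h
  · simp [h, W_apply]
  · rw [W_apply, support_monomial, if_neg h, Finset.sum_singleton, coeff_monomial, if_pos rfl]

lemma mdeg_eq_sum (β : ι →₀ ℕ) : mdeg β = β.sum fun _ e => e := by
  rw [mdeg, Finsupp.sum_fintype]; intro; rfl

lemma mdeg_eq_zero {β : ι →₀ ℕ} (h : mdeg β = 0) : β = 0 := by
  ext i
  have := Finset.sum_eq_zero_iff.mp h i (Finset.mem_univ i)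
  simpa using this

lemma mem_support_mdeg_le {q : MvPolynomial ι ℝ} {β : ι →₀ ℕ} (h : β ∈ q.support) :
    mdeg β ≤ q.totalDegree := by
  rw [mdeg_eq_sum]; exact le_totalDegree h

lemma mdeg_sub_single {β : ι →₀ ℕ} {j : ι} (h : β j ≠ 0) :
    mdeg (β - Finsupp.single j 1) + 1 = mdeg β := by
  have e1 : mdeg β = ∑ i ∈ Finset.univ.erase j, β i + β j :=
    (Finset.sum_erase_add _ _ (Finset.mem_univ j)).symm
  have e2 : mdeg (β - Finsupp.single j 1) =
      ∑ i ∈ Finset.univ.erase j, ((β - Finsupp.single j 1 : ι →₀ ℕ)) i + ((β - Finsupp.single j 1 : ι →₀ ℕ)) j :=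
    (Finset.sum_erase_add _ _ (Finset.mem_univ j)).symm
  have h3 : ∑ i ∈ Finset.univ.erase j, ((β - Finsupp.single j 1 : ι →₀ ℕ)) i =
      ∑ i ∈ Finset.univ.erase j, β i :=
    Finset.sum_congr rfl fun i hi => by
      rw [Finsupp.tsub_apply, Finsupp.single_apply,
        if_neg (fun hh => (Finset.mem_erase.mp hi).1 hh.symm), Nat.sub_zero]
  have h4 : ((β - Finsupp.single j 1 : ι →₀ ℕ)) j = β j - 1 := by
    rw [Finsupp.tsub_apply, Finsupp.single_apply, if_pos rfl]
  rw [e1, e2, h3, h4]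
  omega

lemma sub_single_inj {β γ : ι →₀ ℕ} {j : ι} (hβ : β j ≠ 0) (hγ : γ j ≠ 0)
    (h : β - Finsupp.single j 1 = γ - Finsupp.single j 1) : β = γ := by
  ext i
  have hi := DFunLike.congr_fun h i
  rw [Finsupp.tsub_apply, Finsupp.tsub_apply, Finsupp.single_apply] at hi
  rcases eq_or_ne j i with rfl | hij
  · rw [if_pos rfl] at hi; omega
  · rw [if_neg hij] at hi; omega

lemma pderiv_as_sum (q : MvPolynomial ι ℝ) (j : ι) :
    pderiv j q = ∑ β ∈ q.support, monomial (β - Finsupp.single j 1) (q.coeff β * β j) := by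
  conv_lhs => rw [q.as_sum]
  rw [map_sum]
  exact Finset.sum_congr rfl fun β _ => pderiv_monomial

lemma coeff_pderiv_sub {q : MvPolynomial ι ℝ} {β : ι →₀ ℕ} {j : ι} (hβ : β j ≠ 0) :
    (pderiv j q).coeff (β - Finsupp.single j 1) = q.coeff β * β j := by
  rw [pderiv_as_sum, ← coeffAddMonoidHom_apply, map_sum]
  rw [Finset.sum_eq_single β]
  · rw [coeffAddMonoidHom_apply, coeff_monomial, if_pos rfl]
  · intro γ _ hne
    rw [coeffAddMonoidHom_apply, coeff_monomial]
    rcases eq_or_ne (γ j) 0 with h0 | h0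
    · simp [h0]
    · rw [if_neg (fun h => hne (sub_single_inj h0 hβ h))]
  · intro h
    rw [coeffAddMonoidHom_apply, coeff_monomial, notMem_support_iff.mp h, zero_mul]
    simp

lemma totalDegree_pderiv_le' {q : MvPolynomial ι ℝ} {d : ℕ} (h : q.totalDegree ≤ d + 1) (j : ι) :
    (pderiv j q).totalDegree ≤ d := by
  rw [pderiv_as_sum]
  refine (totalDegree_finset_sum _ _).trans (Finset.sup_le fun β hβ => ?_)
  rcases eq_or_ne (β j) 0 with h0 | h0
  · simp [h0]
  · refine (totalDegree_monomial_le _ _).trans ?_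
    have heq : ((β - Finsupp.single j 1).sum fun _ => id) = mdeg (β - Finsupp.single j 1) :=
      (mdeg_eq_sum _).symm
    rw [heq]
    have := mdeg_sub_single (β := β) h0
    have := (mem_support_mdeg_le hβ).trans h
    omega

lemma support_eq_C_of_pderiv_eq_zero {q : MvPolynomial ι ℝ} (h : ∀ j, pderiv j q = 0) :
    q = C (q.coeff 0) := by
  ext γ
  rw [coeff_C]
  rcases eq_or_ne (0 : ι →₀ ℕ) γ with rfl | hne
  · simp
  · rw [if_neg hne]
    by_contra hc
    obtain ⟨j, hj⟩ : ∃ j, γ j ≠ 0 := by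
      by_contra hall
      push_neg at hall
      exact hne (by ext i; simpa using (hall i).symm)
    have := coeff_pderiv_sub (q := q) hj
    rw [h j] at this
    simp only [coeff_zero] at this
    exact hc (by
      have : q.coeff γ * (γ j : ℝ) = 0 := this.symm
      rcases mul_eq_zero.mp this with h' | h'
      · exact h'
      · exact absurd (Nat.cast_eq_zero.mp h') hj)
variable {μ : Measure (ι → ℝ)} {N : ℕ∞} {p : (ι →₀ ℕ) → MvPolynomial ι ℝ}

lemma mdeg_pos {β : ι →₀ ℕ} (h : β ≠ 0) : 0 < mdeg β := by
  rcases Nat.eq_zero_or_pos (mdeg β) with h0 | h0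
  · exact absurd (mdeg_eq_zero h0) h
  · exact h0

lemma segal_deg (hp : IsSegalFamily μ N p) :
    ∀ k : ℕ, ∀ β : ι →₀ ℕ, mdeg β = k → (k : ℕ∞) < N → (p β).totalDegree ≤ k := by
  intro k
  induction k using Nat.strong_induction_on with
  | _ k IH =>
  intro β hβ hk
  rw [totalDegree]
  refine Finset.sup_le fun γ hγ => ?_
  have hγd : (γ.sum fun _ e => e) = mdeg γ := (mdeg_eq_sum γ).symm
  rw [hγd]
  by_contra hlt
  push_neg at hlt
  obtain ⟨j, hj⟩ : ∃ j, γ j ≠ 0 := by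
    by_contra hall
    push_neg at hall
    have : γ = 0 := by ext i; simpa using hall i
    rw [this] at hlt
    simp [mdeg] at hlt
  have hc := coeff_pderiv_sub (q := p β) (β := γ) (j := j) hj
  rw [hp.2.1 β (hβ ▸ hk) j, coeff_smul] at hc
  have hne : (p β).coeff γ * (γ j : ℝ) ≠ 0 :=
    mul_ne_zero (mem_support_iff.mp hγ) (Nat.cast_ne_zero.mpr hj)
  rw [← hc] at hne
  have hβj : β j ≠ 0 := by
    intro h0
    rw [h0] at hne; simp at hne
  have hpc : (p (β - Finsupp.single j 1)).coeff (γ - Finsupp.single j 1) ≠ 0 := by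
    intro h0
    rw [smul_eq_mul, h0, mul_zero] at hne; exact hne rfl
  have hkpos : 0 < k := by
    have := mdeg_pos (β := β) (fun h0 => hβj (by rw [h0]; rfl))
    omega
  have hmb : mdeg (β - Finsupp.single j 1) = k - 1 := by
    have := mdeg_sub_single hβj; omega
  have hklt : ((k - 1 : ℕ) : ℕ∞) < N :=
    lt_of_le_of_lt (Nat.cast_le.mpr (Nat.sub_le k 1)) hk
  have hdeg := IH (k - 1) (by omega) _ hmb hklt
  have hmem : γ - Finsupp.single j 1 ∈ (p (β - Finsupp.single j 1)).support :=
    mem_support_iff.mpr hpc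
  have := mem_support_mdeg_le hmem
  have := mdeg_sub_single hj
  omega

lemma W_deg_le (hp : IsSegalFamily μ N p) {q : MvPolynomial ι ℝ}
    (hq : (q.totalDegree : ℕ∞) < N) : (W p q).totalDegree ≤ q.totalDegree := by
  rw [W_apply]
  refine (totalDegree_finset_sum _ _).trans (Finset.sup_le fun β hβ => ?_)
  have h1 : mdeg β ≤ q.totalDegree := mem_support_mdeg_le hβ
  have h2 : ((mdeg β : ℕ) : ℕ∞) < N := lt_of_le_of_lt (Nat.cast_le.mpr h1) hq
  exact (totalDegree_smul_le _ _).trans ((segal_deg hp (mdeg β) β rfl h2).trans h1)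

lemma W_pderiv (hp : IsSegalFamily μ N p) {q : MvPolynomial ι ℝ}
    (hq : (q.totalDegree : ℕ∞) < N) (j : ι) :
    pderiv j (W p q) = W p (pderiv j q) := by
  have hβN : ∀ β ∈ q.support, ((mdeg β : ℕ) : ℕ∞) < N := fun β hβ =>
    lt_of_le_of_lt (Nat.cast_le.mpr (mem_support_mdeg_le hβ)) hq
  have h1 : pderiv j (W p q) =
      ∑ β ∈ q.support, q.coeff β • ((β j : ℝ) • p (β - Finsupp.single j 1)) := by
    rw [W_apply, map_sum]
    exact Finset.sum_congr rfl fun β hβ => by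
      rw [smul_eq_C_mul, pderiv_mul, pderiv_C, zero_mul, zero_add, hp.2.1 β (hβN β hβ) j,
        C_mul']
  rw [h1, pderiv_as_sum, map_sum]
  exact Finset.sum_congr rfl fun β hβ => by
    rw [W_monomial, smul_smul]

lemma eval_W (x : ι → ℝ) (q : MvPolynomial ι ℝ) :
    eval x (W p q) = ∑ β ∈ q.support, q.coeff β * eval x (p β) := by
  rw [W_apply, map_sum]
  exact Finset.sum_congr rfl fun β _ => by rw [smul_eq_C_mul, map_mul, eval_C]

lemma W_C (hp : IsSegalFamily μ N p) (a : ℝ) : W p (C a) = C a := by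
  calc W p (C a) = W p (monomial 0 a) := by rw [C_apply]
    _ = C a := by rw [W_monomial, hp.1, smul_eq_C_mul, mul_one]

lemma eval_zero_eq_coeff (q : MvPolynomial ι ℝ) : eval (0 : ι → ℝ) q = q.coeff 0 := by
  rw [eval_eq]
  rw [Finset.sum_eq_single 0]
  · simp
  · intro γ hγ hne
    obtain ⟨i, hi⟩ : ∃ i, γ i ≠ 0 := by
      by_contra hall
      push_neg at hall
      exact hne (by ext i; simpa using hall i)
    have him : i ∈ γ.support := Finsupp.mem_support_iff.mpr hi
    rw [Finset.prod_eq_zero him (by simp [zero_pow hi]), mul_zero]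
  · intro h
    rw [notMem_support_iff.mp h, zero_mul]


lemma mdeg_eq_support_sum (β : ι →₀ ℕ) : mdeg β = ∑ i ∈ β.support, β i := by
  rw [mdeg]
  exact (Finset.sum_subset (Finset.subset_univ _) fun i _ hi =>
    Finsupp.notMem_support_iff.mp hi).symm

lemma integrable_eval {μ : Measure (ι → ℝ)} [IsProbabilityMeasure μ] {N : ℕ∞}
    (hm : HasMoments μ N) {r : MvPolynomial ι ℝ} (hr : (r.totalDegree : ℕ∞) < N) :
    Integrable (fun x => eval x r) μ := by
  have heval : (fun x : ι → ℝ => eval x r) =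
      fun x => ∑ β ∈ r.support, r.coeff β * ∏ i ∈ β.support, x i ^ β i := by
    funext x; rw [eval_eq]
  rw [heval]
  refine integrable_finset_sum _ fun β hβ => Integrable.const_mul ?_ _
  have hk : ((mdeg β : ℕ) : ℕ∞) < N :=
    lt_of_le_of_lt (Nat.cast_le.mpr (mem_support_mdeg_le hβ)) hr
  have hcont : Continuous fun x : ι → ℝ => ∏ i ∈ β.support, x i ^ β i :=
    continuous_finset_prod _ fun i _ => (continuous_apply i).pow _
  refine Integrable.mono (hm (mdeg β) hk) hcont.aestronglyMeasurable ?_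
  refine Filter.Eventually.of_forall fun x => ?_
  have hs : (0:ℝ) ≤ ∑ i, |x i| := Finset.sum_nonneg fun i _ => abs_nonneg _
  have h1 : ‖∏ i ∈ β.support, x i ^ β i‖ ≤ ∏ i ∈ β.support, (∑ i, |x i|) ^ β i := by
    rw [norm_prod]
    refine Finset.prod_le_prod (fun i _ => norm_nonneg _) fun i _ => ?_
    rw [norm_pow, Real.norm_eq_abs]
    exact pow_le_pow_left₀ (abs_nonneg _) (Finset.single_le_sum
      (f := fun i => |x i|) (fun i _ => abs_nonneg _) (Finset.mem_univ i)) _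
  refine h1.trans ?_
  rw [Finset.prod_pow_eq_pow_sum, ← mdeg_eq_support_sum]
  rw [Real.norm_eq_abs, abs_of_nonneg (pow_nonneg hs _)]

lemma integral_W {μ : Measure (ι → ℝ)} [IsProbabilityMeasure μ] {N : ℕ∞}
    {p : (ι →₀ ℕ) → MvPolynomial ι ℝ} (hp : IsSegalFamily μ N p) (hm : HasMoments μ N)
    {q : MvPolynomial ι ℝ} (hq : (q.totalDegree : ℕ∞) < N) :
    ∫ x, eval x (W p q) ∂μ = q.coeff 0 := by
  have hβN : ∀ β ∈ q.support, ((mdeg β : ℕ) : ℕ∞) < N := fun β hβ =>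
    lt_of_le_of_lt (Nat.cast_le.mpr (mem_support_mdeg_le hβ)) hq
  have hint : ∀ β ∈ q.support, Integrable (fun x => q.coeff β * eval x (p β)) μ := by
    intro β hβ
    refine Integrable.const_mul (integrable_eval hm ?_) _
    exact lt_of_le_of_lt (Nat.cast_le.mpr (segal_deg hp (mdeg β) β rfl (hβN β hβ))) (hβN β hβ)
  have h1 : ∫ x, eval x (W p q) ∂μ = ∑ β ∈ q.support, ∫ x, q.coeff β * eval x (p β) ∂μ := by
    rw [← integral_finset_sum _ hint]
    congr 1
    funext x
    rw [eval_W]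
  rw [h1, Finset.sum_eq_single 0]
  · rcases eq_or_ne (q.coeff 0) 0 with h0 | h0
    · rw [h0]; simp
    · rw [hp.1]
      simp
  · intro β hβ hne
    rw [MeasureTheory.integral_const_mul, hp.2.2 β (mdeg_pos hne) (hβN β hβ), mul_zero]
  · intro h
    rw [notMem_support_iff.mp h]
    simp

section Matrix
variable {n m : ℕ}

def lin (T : Matrix (Fin m) (Fin n) ℝ) : Fin m → MvPolynomial (Fin n) ℝ :=
  fun k => ∑ j, C (T k j) * X j

lemma eval_lin (T : Matrix (Fin m) (Fin n) ℝ) (x : Fin n → ℝ) (k : Fin m) :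
    eval x (lin T k) = T.mulVec x k := by
  simp [lin, Matrix.mulVec, dotProduct]

lemma aeval_eval {ι : Type*} (f : ι → ℝ) (r : MvPolynomial ι ℝ) : aeval f r = eval f r := by
  rw [← coe_aeval_eq_eval]; rfl

lemma eval_comp (T : Matrix (Fin m) (Fin n) ℝ) (x : Fin n → ℝ) (r : MvPolynomial (Fin m) ℝ) :
    eval x (bind₁ (lin T) r) = eval (T.mulVec x) r := by
  rw [← aeval_eval, aeval_bind₁]
  rw [show (fun k => aeval x (lin T k)) = T.mulVec x from funext fun k => by
    rw [aeval_eval, eval_lin]]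
  exact aeval_eval _ _

lemma pderiv_lin (T : Matrix (Fin m) (Fin n) ℝ) (k : Fin m) (j : Fin n) :
    pderiv j (lin T k) = C (T k j) := by
  rw [lin, map_sum]
  rw [Finset.sum_eq_single j]
  · rw [pderiv_mul, pderiv_C, zero_mul, zero_add, pderiv_X_self, mul_one]
  · intro b _ hne
    rw [pderiv_mul, pderiv_C, zero_mul, zero_add, pderiv_X_of_ne hne, mul_zero]
  · intro h; exact absurd (Finset.mem_univ j) h

lemma totalDegree_lin_le (T : Matrix (Fin m) (Fin n) ℝ) (k : Fin m) :
    (lin T k).totalDegree ≤ 1 := by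
  refine (totalDegree_finset_sum _ _).trans (Finset.sup_le fun j _ => ?_)
  refine (totalDegree_mul _ _).trans ?_
  simp [totalDegree_X]

lemma totalDegree_comp_le (T : Matrix (Fin m) (Fin n) ℝ) (r : MvPolynomial (Fin m) ℝ) :
    (bind₁ (lin T) r).totalDegree ≤ r.totalDegree := by
  conv_lhs => rw [r.as_sum]
  rw [map_sum]
  refine (totalDegree_finset_sum _ _).trans (Finset.sup_le fun β hβ => ?_)
  rw [bind₁_monomial]
  refine (totalDegree_mul _ _).trans ?_
  rw [totalDegree_C, zero_add]
  refine (totalDegree_finset_prod _ _).trans ?_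
  calc ∑ i ∈ β.support, ((lin T i) ^ β i).totalDegree
      ≤ ∑ i ∈ β.support, β i * 1 := Finset.sum_le_sum fun i _ =>
        (totalDegree_pow _ _).trans (Nat.mul_le_mul_left _ (totalDegree_lin_le T i))
    _ = mdeg β := by rw [mdeg_eq_support_sum]; simp
    _ ≤ r.totalDegree := mem_support_mdeg_le hβ

lemma pderiv_comp (T : Matrix (Fin m) (Fin n) ℝ) (r : MvPolynomial (Fin m) ℝ) (j : Fin n) :
    pderiv j (bind₁ (lin T) r) = ∑ k, C (T k j) * bind₁ (lin T) (pderiv k r) := by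
  induction r using MvPolynomial.induction_on with
  | C a => simp
  | add f g hf hg =>
    simp only [map_add, hf, hg, mul_add, Finset.sum_add_distrib]
  | mul_X f i hf =>
    have hR : ∀ k, bind₁ (lin T) (pderiv k (f * X i)) =
        bind₁ (lin T) (pderiv k f) * lin T i + (if k = i then bind₁ (lin T) f else 0) := by
      intro k
      rw [pderiv_mul, pderiv_X, map_add, map_mul, bind₁_X_right]
      rcases eq_or_ne k i with rfl | h
      · rw [if_pos rfl, Pi.single_eq_same, mul_one]
      · rw [if_neg h, Pi.single_eq_of_ne (Ne.symm h), mul_zero, map_zero]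
    calc pderiv j (bind₁ (lin T) (f * X i))
        = pderiv j (bind₁ (lin T) f * lin T i) := by rw [map_mul, bind₁_X_right]
      _ = (∑ k, C (T k j) * bind₁ (lin T) (pderiv k f)) * lin T i
            + bind₁ (lin T) f * C (T i j) := by rw [pderiv_mul, hf, pderiv_lin]
      _ = (∑ k, C (T k j) * bind₁ (lin T) (pderiv k f) * lin T i)
            + C (T i j) * bind₁ (lin T) f := by
          rw [Finset.sum_mul, mul_comm (bind₁ (lin T) f) (C (T i j))]
      _ = ∑ k, C (T k j) * bind₁ (lin T) (pderiv k (f * X i)) := by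
          have hsum : ∑ k, C (T k j) * bind₁ (lin T) (pderiv k (f * X i)) =
              ∑ k, (C (T k j) * bind₁ (lin T) (pderiv k f) * lin T i
                + if k = i then C (T k j) * bind₁ (lin T) f else 0) :=
            Finset.sum_congr rfl fun k _ => by
              rw [hR k, mul_add, ← mul_assoc, mul_ite, mul_zero]
          rw [hsum, Finset.sum_add_distrib,
            Finset.sum_ite_eq' Finset.univ i fun k => C (T k j) * bind₁ (lin T) f,
            if_pos (Finset.mem_univ i)]
lemma measurable_mulVec (T : Matrix (Fin m) (Fin n) ℝ) :
    Measurable fun x : Fin n → ℝ => T.mulVec x :=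
  measurable_pi_lambda _ fun k => by
    simp only [Matrix.mulVec, dotProduct]
    exact Finset.measurable_sum _ fun j _ => (measurable_pi_apply j).const_mul _

lemma continuous_abs_sum_pow (k : ℕ) {ι : Type*} [Fintype ι] :
    Continuous fun x : ι → ℝ => (∑ i, |x i|) ^ k :=
  (continuous_finset_sum _ fun i _ => (continuous_apply i).abs).pow k

lemma hasMoments_map {N : ℕ∞} {μ : Measure (Fin n → ℝ)} (hm : HasMoments μ N)
    (T : Matrix (Fin m) (Fin n) ℝ) : HasMoments (μ.map fun x => T.mulVec x) N := by
  intro k hk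
  rw [integrable_map_measure (continuous_abs_sum_pow k).aestronglyMeasurable
    (measurable_mulVec T).aemeasurable]
  set Cst := ∑ i : Fin m, ∑ j : Fin n, |T i j| with hCst
  have hC : 0 ≤ Cst := Finset.sum_nonneg fun i _ => Finset.sum_nonneg fun j _ => abs_nonneg _
  refine Integrable.mono ((hm k hk).const_mul (Cst ^ k))
    (Continuous.aestronglyMeasurable ?_) (Filter.Eventually.of_forall fun x => ?_)
  · exact (continuous_abs_sum_pow k).comp (continuous_pi fun i => by
      simp only [Matrix.mulVec, dotProduct]
      exact continuous_finset_sum _ fun j _ => continuous_const.mul (continuous_apply j))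
  · have hs : (0:ℝ) ≤ ∑ j, |x j| := Finset.sum_nonneg fun j _ => abs_nonneg _
    have hmv : ∀ i, T.mulVec x i = ∑ j, T i j * x j := fun i => rfl
    have h1 : ∑ i, |T.mulVec x i| ≤ Cst * (∑ j, |x j|) := by
      rw [hCst, Finset.sum_mul]
      refine Finset.sum_le_sum fun i _ => ?_
      rw [Finset.sum_mul, hmv i]
      refine le_trans (Finset.abs_sum_le_sum_abs _ _) (Finset.sum_le_sum fun j _ => ?_)
      rw [abs_mul]
      exact mul_le_mul_of_nonneg_left (Finset.single_le_sum
        (f := fun j => |x j|) (fun j _ => abs_nonneg _) (Finset.mem_univ j)) (abs_nonneg _)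
    have h2 : (∑ i, |T.mulVec x i|) ^ k ≤ Cst ^ k * (∑ j, |x j|) ^ k := by
      rw [← mul_pow]
      exact pow_le_pow_left₀ (Finset.sum_nonneg fun i _ => abs_nonneg _) h1 k
    calc ‖((fun y : Fin m → ℝ => (∑ i, |y i|) ^ k) ∘ fun x => T.mulVec x) x‖
        = (∑ i, |T.mulVec x i|) ^ k := by
          rw [Function.comp_apply, Real.norm_eq_abs,
            abs_of_nonneg (pow_nonneg (Finset.sum_nonneg fun i _ => abs_nonneg _) _)]
      _ ≤ Cst ^ k * (∑ j, |x j|) ^ k := h2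
      _ ≤ ‖Cst ^ k * (∑ j, |x j|) ^ k‖ := le_abs_self _

lemma coeff_zero_comp (T : Matrix (Fin m) (Fin n) ℝ) (r : MvPolynomial (Fin m) ℝ) :
    (bind₁ (lin T) r).coeff 0 = r.coeff 0 := by
  rw [← eval_zero_eq_coeff, eval_comp, Matrix.mulVec_zero, eval_zero_eq_coeff]

lemma eq_C_of_totalDegree_eq_zero {ι : Type*} [Fintype ι] [DecidableEq ι]
    {r : MvPolynomial ι ℝ} (h : r.totalDegree = 0) : r = C (r.coeff 0) := by
  ext γ
  rw [coeff_C]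
  rcases eq_or_ne (0 : ι →₀ ℕ) γ with rfl | hne
  · simp
  · rw [if_neg hne]
    by_contra hc
    have hγ : γ ∈ r.support := mem_support_iff.mpr hc
    have h1 := mem_support_mdeg_le hγ
    exact hne (mdeg_eq_zero (by omega)).symm

lemma continuous_eval {ι : Type*} [Fintype ι] (r : MvPolynomial ι ℝ) :
    Continuous fun x : ι → ℝ => eval x r := by
  have : (fun x : ι → ℝ => eval x r) =
      fun x => ∑ β ∈ r.support, r.coeff β * ∏ i ∈ β.support, x i ^ β i := by
    funext x; rw [eval_eq]
  rw [this]
  exact continuous_finset_sum _ fun β _ => continuous_const.mul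
    (continuous_finset_prod _ fun i _ => (continuous_apply i).pow _)

lemma key {N : ℕ∞} (T : Matrix (Fin m) (Fin n) ℝ) (μ : Measure (Fin n → ℝ))
    [IsProbabilityMeasure μ] (hm : HasMoments μ N)
    {pX : (Fin n →₀ ℕ) → MvPolynomial (Fin n) ℝ}
    {pY : (Fin m →₀ ℕ) → MvPolynomial (Fin m) ℝ}
    (hpX : IsSegalFamily μ N pX)
    (hpY : IsSegalFamily (μ.map fun x => T.mulVec x) N pY) :
    ∀ d : ℕ, (d : ℕ∞) < N → ∀ r : MvPolynomial (Fin m) ℝ, r.totalDegree ≤ d →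
      W pX (bind₁ (lin T) r) = bind₁ (lin T) (W pY r) := by
  have hν : IsProbabilityMeasure (μ.map fun x => T.mulVec x) :=
    Measure.isProbabilityMeasure_map (measurable_mulVec T).aemeasurable
  have hmν : HasMoments (μ.map fun x => T.mulVec x) N := hasMoments_map hm T
  intro d
  induction d with
  | zero =>
    intro hd r hr
    have hrC : r = C (r.coeff 0) := eq_C_of_totalDegree_eq_zero (Nat.le_zero.mp hr)
    rw [hrC, W_C hpY, bind₁_C_right, W_C hpX]
  | succ d IH =>
    intro hd r hr
    have hdN : ((d : ℕ) : ℕ∞) < N := lt_of_le_of_lt (Nat.cast_le.mpr (Nat.le_succ d)) hd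
    have hrN : (r.totalDegree : ℕ∞) < N := lt_of_le_of_lt (Nat.cast_le.mpr hr) hd
    have hcompN : ((bind₁ (lin T) r).totalDegree : ℕ∞) < N :=
      lt_of_le_of_lt (Nat.cast_le.mpr ((totalDegree_comp_le T r).trans hr)) hd
    have hIH : ∀ k, W pX (bind₁ (lin T) (pderiv k r)) = bind₁ (lin T) (W pY (pderiv k r)) :=
      fun k => IH hdN _ (totalDegree_pderiv_le' hr k)
    set A := W pX (bind₁ (lin T) r) with hA
    set B := bind₁ (lin T) (W pY r) with hB
    have hAd : ∀ j, pderiv j A = ∑ k, C (T k j) * bind₁ (lin T) (W pY (pderiv k r)) := by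
      intro j
      rw [hA, W_pderiv hpX hcompN, pderiv_comp, map_sum]
      refine Finset.sum_congr rfl fun k _ => ?_
      rw [C_mul', C_mul', LinearMap.map_smul, hIH k]
    have hBd : ∀ j, pderiv j B = ∑ k, C (T k j) * bind₁ (lin T) (W pY (pderiv k r)) := by
      intro j
      rw [hB, pderiv_comp]
      exact Finset.sum_congr rfl fun k _ => by rw [W_pderiv hpY hrN]
    have hD : ∀ j, pderiv j (A - B) = 0 := fun j => by rw [map_sub, hAd j, hBd j, sub_self]
    have hDC : A - B = C ((A - B).coeff 0) := support_eq_C_of_pderiv_eq_zero hD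
    have hiA : Integrable (fun x => eval x A) μ :=
      integrable_eval hm (lt_of_le_of_lt
        (Nat.cast_le.mpr (W_deg_le hpX hcompN)) hcompN)
    have hiB : Integrable (fun x => eval x B) μ :=
      integrable_eval hm (lt_of_le_of_lt (Nat.cast_le.mpr
        ((totalDegree_comp_le T (W pY r)).trans (W_deg_le hpY hrN))) hrN)
    have hintA : ∫ x, eval x A ∂μ = r.coeff 0 := by
      rw [hA, integral_W hpX hm hcompN, coeff_zero_comp]
    have hintB : ∫ x, eval x B ∂μ = r.coeff 0 := by
      have h1 : (fun x => eval x B) = fun x => eval (T.mulVec x) (W pY r) :=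
        funext fun x => by rw [hB, eval_comp]
      rw [h1, ← integral_map (measurable_mulVec T).aemeasurable
        (continuous_eval (W pY r)).aestronglyMeasurable]
      exact integral_W hpY hmν hrN
    have hc0 : (A - B).coeff 0 = 0 := by
      have h2 : ∫ x, eval x (A - B) ∂μ = 0 := by
        have h3 : (fun x => eval x (A - B)) = fun x => eval x A - eval x B :=
          funext fun x => by rw [map_sub]
        rw [h3, integral_sub hiA hiB, hintA, hintB, sub_self]
      rw [hDC] at h2
      simpa using h2
    have hAB : A - B = 0 := by rw [hDC, hc0, map_zero]
    exact sub_eq_zero.mp hAB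

end Matrix
end WickAux


theorem wick_linear_substitution {n m : ℕ} {Ω : Type*} [MeasurableSpace Ω]
    (P : Measure Ω) [IsProbabilityMeasure P]
    (X : Ω → Fin n → ℝ) (hX : Measurable X)
    (T : Matrix (Fin m) (Fin n) ℝ)
    (q : MvPolynomial (Fin n) ℝ) (pp : MvPolynomial (Fin m) ℝ)
    (hqp : ∀ x : Fin n → ℝ, eval x q = eval (T.mulVec x) pp)
    (N : ℕ∞)
    (hmom : ∀ k : ℕ, (k : ℕ∞) < N → Integrable (fun ω => (∑ i, |X ω i|) ^ k) P)
    (hdq : (q.totalDegree : ℕ∞) < N) (hdp : (pp.totalDegree : ℕ∞) < N)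
    (pX : (Fin n →₀ ℕ) → MvPolynomial (Fin n) ℝ)
    (pY : (Fin m →₀ ℕ) → MvPolynomial (Fin m) ℝ)
    (hpX : IsSegalFamily (P.map X) N pX)
    (hpY : IsSegalFamily (P.map (fun ω => T.mulVec (X ω))) N pY) :
    ∀ᵐ ω ∂P,
      ∑ β ∈ q.support, q.coeff β * eval (X ω) (pX β) =
      ∑ α ∈ pp.support, pp.coeff α * eval (T.mulVec (X ω)) (pY α) := by
  classical
  have hμprob : IsProbabilityMeasure (P.map X) :=
    Measure.isProbabilityMeasure_map hX.aemeasurable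
  have hm : HasMoments (P.map X) N := by
    intro k hk
    rw [integrable_map_measure (WickAux.continuous_abs_sum_pow k).aestronglyMeasurable
      hX.aemeasurable]
    exact hmom k hk
  have hq : q = bind₁ (WickAux.lin T) pp :=
    MvPolynomial.funext fun x => by rw [hqp x, WickAux.eval_comp]
  have hmap : P.map (fun ω => T.mulVec (X ω)) = (P.map X).map (fun x => T.mulVec x) := by
    rw [Measure.map_map (WickAux.measurable_mulVec T) hX]
    rfl
  rw [hmap] at hpY
  have hkey := WickAux.key T (P.map X) hm hpX hpY pp.totalDegree hdp pp le_rfl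
  rw [← hq] at hkey
  refine Filter.Eventually.of_forall fun ω => ?_
  have h1 := congrArg (eval (X ω)) hkey
  rw [WickAux.eval_W, WickAux.eval_comp, WickAux.eval_W] at h1
  exact h1

end
end
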